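/- arXiv:1205.3537 — 6 statements merged into one kernel-verified Lean document; each statement's English description precedes it below -/
import Mathlib

section
/- Let 𝔄 be a unital C*-algebra and let T ∈ 𝔄 be a norm limit of quasinilpotent elements of 𝔄. Then the spectrum of T is connected. -/
open Metric Set Filter

/-- Quantitative perturbation of units: if `x` is a unit with `‖x⁻¹‖ ≤ M` and `y` is within
`(2*M)⁻¹` of `x`, then `y` is a unit with `‖y⁻¹‖ ≤ 2*M`. -/
lemma aux_isUnit_and_inverse_bound {A : Type*} [NormedRing A] [CompleteSpace A] [NormOneClass A]
    {x y : A} {M : ℝ} (hM : 0 < M) (hx : IsUnit x) (hinv : ‖Ring.inverse x‖ ≤ M)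
    (hy : ‖y - x‖ < (2 * M)⁻¹) : IsUnit y ∧ ‖Ring.inverse y‖ ≤ 2 * M := by
  obtain ⟨u, rfl⟩ := hx
  rw [Ring.inverse_unit] at hinv
  set t : A := y - (u : A) with ht
  set s : A := -((u⁻¹ : Aˣ) * t) with hs
  have hsn : ‖s‖ ≤ 2⁻¹ := by
    have h1 : ‖s‖ ≤ ‖((u⁻¹ : Aˣ) : A)‖ * ‖t‖ := by
      rw [hs, norm_neg]; exact norm_mul_le _ _
    have h2 : ‖((u⁻¹ : Aˣ) : A)‖ * ‖t‖ ≤ M * (2 * M)⁻¹ := by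
      apply mul_le_mul hinv hy.le (norm_nonneg _) hM.le
    have h3 : M * (2 * M)⁻¹ = 2⁻¹ := by field_simp
    linarith
  have hs1 : ‖s‖ < 1 := lt_of_le_of_lt hsn (by norm_num)
  have hw : y = (u : A) * (1 - s) := by
    have : (u : A) * ((u⁻¹ : Aˣ) * t) = t := by
      rw [← mul_assoc, Units.mul_inv, one_mul]
    rw [hs, mul_sub, mul_one, mul_neg, sub_neg_eq_add, this, ht]
    abel
  set w : Aˣ := u * Units.oneSub s hs1 with hwdef
  have hwy : (w : A) = y := by
    rw [hwdef, Units.val_mul, Units.val_oneSub, hw]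
  have hyu : IsUnit y := ⟨w, hwy⟩
  refine ⟨hyu, ?_⟩
  have hinvy : Ring.inverse y = ((Units.oneSub s hs1)⁻¹ : Aˣ) * ((u⁻¹ : Aˣ) : A) := by
    rw [← hwy, Ring.inverse_unit, hwdef, mul_inv_rev, Units.val_mul]
  have hgeom : ‖(((Units.oneSub s hs1)⁻¹ : Aˣ) : A)‖ ≤ 2 := by
    have : (((Units.oneSub s hs1)⁻¹ : Aˣ) : A) = ∑' n : ℕ, s ^ n := rfl
    rw [this]
    calc ‖∑' n : ℕ, s ^ n‖ ≤ ‖(1 : A)‖ - 1 + (1 - ‖s‖)⁻¹ :=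
          tsum_geometric_le_of_norm_lt_one s hs1
      _ = (1 - ‖s‖)⁻¹ := by rw [norm_one]; ring
      _ ≤ 2 := by
          rw [inv_le_comm₀ (by linarith) (by norm_num)]
          linarith
  calc ‖Ring.inverse y‖ ≤ ‖(((Units.oneSub s hs1)⁻¹ : Aˣ) : A)‖ * ‖((u⁻¹ : Aˣ) : A)‖ := by
        rw [hinvy]; exact norm_mul_le _ _
    _ ≤ 2 * M := mul_le_mul hgeom hinv (norm_nonneg _) (by norm_num)

/-- The key step: the spectrum of `T` cannot be split into a closed part containing `0` and a
nonempty compact part away from `0`. -/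
lemma aux_no_split {A : Type*} [CStarAlgebra A] [Nontrivial A] (T : A) (Q : ℕ → A)
    (hQ : ∀ n, spectrum ℂ (Q n) = {0})
    (hlim : Filter.Tendsto Q Filter.atTop (nhds T))
    (K₀ K₁ : Set ℂ) (h₀c : IsClosed K₀) (h₁c : IsCompact K₁)
    (hcov : spectrum ℂ T = K₀ ∪ K₁) (hdisj : ∀ z, z ∈ K₀ → z ∉ K₁)
    (h0 : (0 : ℂ) ∈ K₀) (hne : K₁.Nonempty) : False := by
  classical
  -- minimal distance from K₁ to K₀ is positive
  obtain ⟨x₀, hx₀K, hx₀min⟩ :=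
    h₁c.exists_isMinOn hne (Metric.continuous_infDist_pt K₀).continuousOn
  set m : ℝ := infDist x₀ K₀ with hm
  have hmpos : 0 < m := by
    rw [hm, ← (h₀c.notMem_iff_infDist_pos ⟨0, h0⟩ (x := x₀))]
    intro hx₀0
    exact hdisj x₀ hx₀0 hx₀K
  set δ : ℝ := m / 2 with hδ
  have hδpos : 0 < δ := by positivity
  set U : Set ℂ := {z | infDist z K₁ < δ} with hU
  have hUopen : IsOpen U := isOpen_lt (Metric.continuous_infDist_pt K₁) continuous_const
  have hK₁U : K₁ ⊆ U := fun z hz => by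
    simp only [hU, mem_setOf_eq, infDist_zero_of_mem hz]; exact hδpos
  -- U is bounded
  obtain ⟨r, hr⟩ := (Metric.isBounded_iff_subset_ball 0).mp h₁c.isBounded
  have hUb : Bornology.IsBounded U := by
    apply (Metric.isBounded_ball (x := (0 : ℂ)) (r := r + δ)).subset
    intro z hz
    obtain ⟨y, hyK, hyd⟩ := (Metric.infDist_lt_iff hne).mp hz
    have : dist y 0 < r := hr hyK
    rw [mem_ball]
    calc dist z 0 ≤ dist z y + dist y 0 := dist_triangle _ _ _
      _ < δ + r := by linarith
      _ = r + δ := by ring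
  -- closure U is disjoint from K₀
  have hclU : closure U ⊆ {z | infDist z K₁ ≤ δ} :=
    closure_minimal (fun z (hz : infDist z K₁ < δ) => le_of_lt hz)
      (isClosed_le (Metric.continuous_infDist_pt K₁) continuous_const)
  have hclK₀ : ∀ z ∈ closure U, z ∉ K₀ := by
    intro z hz hzK₀
    have h1 : infDist z K₁ ≤ δ := hclU hz
    obtain ⟨y, hyK, hyd⟩ := h₁c.exists_infDist_eq_dist hne z
    have h2 : dist z y ≤ δ := hyd ▸ h1
    have h3 : m ≤ infDist y K₀ := hx₀min hyK
    have h4 : infDist y K₀ ≤ dist y z := infDist_le_dist_of_mem hzK₀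
    rw [dist_comm] at h4
    have : m ≤ δ := by linarith
    rw [hδ] at this; linarith
  have h0clU : (0 : ℂ) ∉ closure U := fun h => hclK₀ 0 h h0
  -- frontier U is in the resolvent set of T
  have hfrontier : ∀ z ∈ frontier U, z ∈ resolventSet ℂ T := by
    intro z hz
    have hz1 : z ∈ closure U := frontier_subset_closure hz
    have hz2 : z ∉ U := by
      rw [hUopen.frontier_eq] at hz; exact hz.2
    have hzK₁ : z ∉ K₁ := fun h => hz2 (hK₁U h)
    have hzK₀ : z ∉ K₀ := hclK₀ z hz1
    by_contra hros
    have : z ∈ spectrum ℂ T := hros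
    rw [hcov] at this
    exact this.elim hzK₀ hzK₁
  -- uniform bound on the resolvent of T over the frontier
  have hfc : IsCompact (frontier U) :=
    (hUb.isCompact_closure).of_isClosed_subset isClosed_frontier frontier_subset_closure
  have hcont : ContinuousOn (resolvent T) (frontier U) := fun z hz =>
    ((spectrum.hasDerivAt_resolvent (hfrontier z hz)).continuousAt).continuousWithinAt
  obtain ⟨M₀, hM₀⟩ := hfc.exists_bound_of_continuousOn hcont
  set M : ℝ := max M₀ 1 with hMdef
  have hMpos : 0 < M := lt_of_lt_of_le one_pos (le_max_right _ _)
  have hMb : ∀ z ∈ frontier U, ‖resolvent T z‖ ≤ M :=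
    fun z hz => (hM₀ z hz).trans (le_max_left _ _)
  -- choose n with ‖Q n - T‖ < (4*M)⁻¹
  have h4M : (0 : ℝ) < (4 * M)⁻¹ := by positivity
  obtain ⟨n, hn⟩ := Metric.tendsto_atTop.mp hlim (4 * M)⁻¹ h4M
  have hQT : ‖Q n - T‖ < (4 * M)⁻¹ := by rw [← dist_eq_norm]; exact hn n le_rfl
  have hQT' : ‖Q n - T‖ < (2 * M)⁻¹ := by
    apply lt_of_lt_of_le hQT
    apply inv_anti₀ (by positivity)
    nlinarith
  -- Q n resolvent function
  set g : ℂ → A := fun z => Ring.inverse (algebraMap ℂ A z - Q n) with hg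
  -- bound of g on the frontier, via perturbation from the resolvent of T
  have hgfront : ∀ z ∈ frontier U, ‖g z‖ ≤ 2 * M := by
    intro z hz
    have hzres := hfrontier z hz
    have hxinv : ‖Ring.inverse (algebraMap ℂ A z - T)‖ ≤ M := by
      have := hMb z hz
      rwa [resolvent] at this
    have hnear : ‖(algebraMap ℂ A z - Q n) - (algebraMap ℂ A z - T)‖ < (2 * M)⁻¹ := by
      have : (algebraMap ℂ A z - Q n) - (algebraMap ℂ A z - T) = -(Q n - T) := by abel
      rw [this, norm_neg]; exact hQT'
    exact (aux_isUnit_and_inverse_bound hMpos hzres hxinv hnear).2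
  -- g is holomorphic on closure U (since 0 ∉ closure U and spectrum (Q n) = {0})
  have hclres : ∀ z ∈ closure U, z ∈ resolventSet ℂ (Q n) := by
    intro z hz
    have hz0 : z ≠ 0 := fun h => h0clU (h ▸ hz)
    by_contra hres
    have : z ∈ spectrum ℂ (Q n) := hres
    rw [hQ n] at this
    exact hz0 this
  have hdiff : DiffContOnCl ℂ g U := by
    have hdOn : DifferentiableOn ℂ g (closure U) := fun z hz =>
      ((spectrum.hasDerivAt_resolvent (hclres z hz)).differentiableAt).differentiableWithinAt
    exact ⟨hdOn.mono subset_closure, hdOn.continuousOn⟩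
  -- maximum principle: g is bounded by 2*M on closure U
  obtain ⟨lam1, hlam1⟩ := hne
  have hlam1cl : lam1 ∈ closure U := subset_closure (hK₁U hlam1)
  have hgbound : ‖g lam1‖ ≤ 2 * M :=
    Complex.norm_le_of_forall_mem_frontier_norm_le hUb hdiff hgfront hlam1cl
  -- but lam1 ∈ spectrum T, contradiction via perturbation
  have hlam1res : lam1 ∈ resolventSet ℂ (Q n) := hclres lam1 hlam1cl
  have hlam1unit : IsUnit (algebraMap ℂ A lam1 - Q n) := hlam1res
  have hfinal : IsUnit (algebraMap ℂ A lam1 - T) := by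
    have hnear : ‖(algebraMap ℂ A lam1 - T) - (algebraMap ℂ A lam1 - Q n)‖ < (2 * (2 * M))⁻¹ := by
      have h1 : (algebraMap ℂ A lam1 - T) - (algebraMap ℂ A lam1 - Q n) = Q n - T := by abel
      have h2 : (2 * (2 * M) : ℝ)⁻¹ = (4 * M)⁻¹ := by ring_nf
      rw [h1, h2]; exact hQT
    exact (aux_isUnit_and_inverse_bound (by positivity) hlam1unit hgbound hnear).1
  have hlam1spec : lam1 ∈ spectrum ℂ T := hcov ▸ Or.inr hlam1
  exact spectrum.mem_iff.mp hlam1spec hfinal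

/-- If `T` in a unital C*-algebra is a norm limit of quasinilpotent elements,
then the spectrum of `T` is connected. -/
theorem spectrum_isConnected_of_limit_quasinilpotent
    {A : Type*} [CStarAlgebra A] (T : A) (Q : ℕ → A)
    (hQ : ∀ n, spectrum ℂ (Q n) = {0})
    (hlim : Filter.Tendsto Q Filter.atTop (nhds T)) :
    IsConnected (spectrum ℂ T) := by
  rcases subsingleton_or_nontrivial A with hA | hA
  · exfalso
    have h1 : (0 : ℂ) ∈ spectrum ℂ (Q 0) := by rw [hQ 0]; exact rfl
    exact spectrum.mem_iff.mp h1 (isUnit_of_subsingleton _)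
  -- 0 ∈ spectrum T
  have h0T : (0 : ℂ) ∈ spectrum ℂ T := by
    by_contra h
    have hTu : IsUnit (algebraMap ℂ A 0 - T) := spectrum.notMem_iff.mp h
    have htend : Filter.Tendsto (fun n => algebraMap ℂ A 0 - Q n) Filter.atTop
        (nhds (algebraMap ℂ A 0 - T)) := tendsto_const_nhds.sub hlim
    have hev : ∀ᶠ n in Filter.atTop, IsUnit (algebraMap ℂ A 0 - Q n) :=
      htend.eventually (Units.isOpen.eventually_mem hTu)
    obtain ⟨n, hn⟩ := hev.exists
    have h1 : (0 : ℂ) ∈ spectrum ℂ (Q n) := by rw [hQ n]; exact rfl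
    exact spectrum.mem_iff.mp h1 hn
  constructor
  · exact ⟨0, h0T⟩
  -- preconnectedness, by contradiction
  intro u v hu hv hcov hune hvne
  by_contra hiv
  rw [Set.not_nonempty_iff_eq_empty] at hiv
  -- build the two compact pieces
  set K_u : Set ℂ := spectrum ℂ T \ v with hKu
  set K_v : Set ℂ := spectrum ℂ T \ u with hKv
  have hKuc : IsClosed K_u := (spectrum.isClosed T).sdiff hv
  have hKvc : IsClosed K_v := (spectrum.isClosed T).sdiff hu
  have hKucpt : IsCompact K_u :=
    (spectrum.isCompact T).of_isClosed_subset hKuc diff_subset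
  have hKvcpt : IsCompact K_v :=
    (spectrum.isCompact T).of_isClosed_subset hKvc diff_subset
  have hmemu : ∀ z ∈ spectrum ℂ T, z ∈ u → z ∉ v := by
    intro z hz hzu hzv
    have : z ∈ spectrum ℂ T ∩ (u ∩ v) := ⟨hz, hzu, hzv⟩
    rw [hiv] at this; exact this
  have hcover : spectrum ℂ T = K_u ∪ K_v := by
    ext z
    constructor
    · intro hz
      rcases hcov hz with hzu | hzv
      · exact Or.inl ⟨hz, hmemu z hz hzu⟩
      · refine Or.inr ⟨hz, fun hzu => hmemu z hz hzu hzv⟩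
    · rintro (⟨hz, _⟩ | ⟨hz, _⟩) <;> exact hz
  have hdisj : ∀ z, z ∈ K_u → z ∉ K_v := by
    rintro z ⟨hz, hznv⟩ ⟨_, hznu⟩
    rcases hcov hz with h | h
    · exact hznu h
    · exact hznv h
  have hKune : K_u.Nonempty := by
    obtain ⟨a, haS, hau⟩ := hune
    exact ⟨a, haS, hmemu a haS hau⟩
  have hKvne : K_v.Nonempty := by
    obtain ⟨b, hbS, hbv⟩ := hvne
    exact ⟨b, hbS, fun hbu => hmemu b hbS hbu hbv⟩
  -- 0 lies in one of the two pieces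
  rcases hcover ▸ h0T with h0u | h0v
  · exact aux_no_split T Q hQ hlim K_u K_v hKuc hKvcpt hcover hdisj h0u hKvne
  · exact aux_no_split T Q hQ hlim K_v K_u hKvc hKucpt
      (by rw [hcover, Set.union_comm]) (fun z hz hz' => hdisj z hz' hz) h0v hKune
end

section
/- Let 𝔄 be a unital C*-algebra and let T ∈ 𝔄 be a norm limit of quasinilpotent elements of 𝔄. Then for every λ ∈ ℂ \ σ(T), the element λ·1 − T lies in the connected component of the identity in the invertible group of 𝔄. -/
open Set

lemma connectedComponent_mem_trans {α : Type*} [TopologicalSpace α] {a b c : α}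
    (h1 : a ∈ connectedComponent b) (h2 : b ∈ connectedComponent c) :
    a ∈ connectedComponent c := by
  rw [connectedComponent_eq h2]; exact h1

/-- A path of invertible elements gives units in the same connected component. -/
lemma units_path_mem_connectedComponent {A : Type*} [NormedRing A] [CompleteSpace A]
    (f : ℝ → A) (hf : ContinuousOn f (Set.Icc 0 1))
    (hu : ∀ s ∈ Set.Icc (0 : ℝ) 1, IsUnit (f s)) (u0 u1 : Aˣ)
    (h0 : (u0 : A) = f 0) (h1 : (u1 : A) = f 1) :
    u1 ∈ connectedComponent u0 := by
  haveI : ConnectedSpace (Set.Icc (0 : ℝ) 1) :=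
    Subtype.connectedSpace (isConnected_Icc zero_le_one)
  set F : Set.Icc (0 : ℝ) 1 → Aˣ := fun s => (hu s s.2).unit with hFdef
  have hfv : Continuous fun s : Set.Icc (0 : ℝ) 1 => f s.val :=
    hf.comp_continuous continuous_subtype_val fun x => x.2
  have hF : Continuous F := by
    refine Units.continuous_iff.mpr ⟨?_, ?_⟩
    · show Continuous fun s => ((F s : Aˣ) : A)
      have : (fun s => ((F s : Aˣ) : A)) = fun s : Set.Icc (0 : ℝ) 1 => f s.val :=
        funext fun s => (hu s s.2).unit_spec
      rw [this]; exact hfv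
    · have heq : (fun s => ((F s)⁻¹ : Aˣ).val) =
          fun s : Set.Icc (0 : ℝ) 1 => Ring.inverse (f s.val) := by
        funext s
        rw [← (hu s s.2).unit_spec, Ring.inverse_unit]
      rw [heq]
      refine continuous_iff_continuousAt.mpr fun s => ?_
      have h1 : ContinuousAt Ring.inverse (f s.val) := by
        have := NormedRing.inverse_continuousAt (hu s s.2).unit
        rwa [(hu s s.2).unit_spec] at this
      exact ContinuousAt.comp (x := s) h1 hfv.continuousAt
  have hrange : IsPreconnected (Set.range F) := isPreconnected_range hF
  have hu0 : u0 ∈ Set.range F := by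
    refine ⟨⟨0, by constructor <;> norm_num⟩, ?_⟩
    exact Units.ext (by simpa [hFdef] using ((hu 0 (by constructor <;> norm_num)).unit_spec.trans h0.symm))
  have hu1 : u1 ∈ Set.range F := by
    refine ⟨⟨1, by constructor <;> norm_num⟩, ?_⟩
    exact Units.ext (by simpa [hFdef] using ((hu 1 (by constructor <;> norm_num)).unit_spec.trans h1.symm))
  exact hrange.subset_connectedComponent hu0 hu1

/-- If `T` in a unital C*-algebra is a norm limit of quasinilpotent elements,
then for every `λ ∉ σ(T)` the element `λ·1 - T` lies in the connected component
of the identity of the invertible group. -/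
theorem smul_one_sub_limit_quasinilpotent_mem_connectedComponent_one
    {A : Type*} [CStarAlgebra A] (T : A) (Q : ℕ → A)
    (hQ : ∀ n, spectrum ℂ (Q n) = {0})
    (hlim : Filter.Tendsto Q Filter.atTop (nhds T))
    (lam : ℂ) (hlam : lam ∉ spectrum ℂ T) :
    ∃ u : Aˣ, (u : A) = lam • (1 : A) - T ∧ u ∈ connectedComponent (1 : Aˣ) := by
  -- A is nontrivial, since quasinilpotents are not units
  have hA : Nontrivial A := by
    by_contra h
    rw [not_nontrivial_iff_subsingleton] at h
    have h0 : (0 : ℂ) ∈ spectrum ℂ (Q 0) := by rw [hQ 0]; rfl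
    exact (spectrum.zero_mem_iff (R := ℂ)).mp h0 (isUnit_of_subsingleton _)
  -- the Q n are not units
  have hQnotunit : ∀ n, ¬IsUnit (Q n) := fun n =>
    (spectrum.zero_mem_iff (R := ℂ)).mp (show (0 : ℂ) ∈ spectrum ℂ (Q n) by rw [hQ n]; rfl)
  -- 0 ∈ σ(T), hence λ ≠ 0
  have hT0 : (0 : ℂ) ∈ spectrum ℂ T := by
    rw [spectrum.zero_mem_iff]
    intro hT
    have : ∀ᶠ n in Filter.atTop, IsUnit (Q n) :=
      hlim.eventually (Units.isOpen.eventually_mem hT)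
    obtain ⟨n, hn⟩ := this.exists
    exact hQnotunit n hn
  have hlam0 : lam ≠ 0 := fun h => hlam (h ▸ hT0)
  -- the spectrum of any complex multiple of Q n is {0}
  have hsmul : ∀ (n : ℕ) (c : ℂ), spectrum ℂ (c • Q n) = {0} := by
    intro n c
    rcases eq_or_ne c 0 with rfl | hc
    · rw [zero_smul, spectrum.zero_eq]
    · rw [show c • Q n = (Units.mk0 c hc) • Q n from rfl,
        spectrum.unit_smul_eq_smul, hQ n]
      ext z
      simp only [Set.mem_smul_set, Set.mem_singleton_iff]
      constructor
      · rintro ⟨y, hy, rfl⟩; simp [hy]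
      · rintro rfl; exact ⟨0, rfl, by simp⟩
  -- the units λ•1 - c•Q n
  have hQunit : ∀ (n : ℕ) (c : ℂ), IsUnit (lam • (1 : A) - c • Q n) := by
    intro n c
    have : lam ∉ spectrum ℂ (c • Q n) := by rw [hsmul n c]; simpa using hlam0
    rw [spectrum.notMem_iff] at this
    rwa [Algebra.algebraMap_eq_smul_one] at this
  -- the unit λ•1 - T
  have hu : IsUnit (lam • (1 : A) - T) := by
    have := spectrum.notMem_iff.mp hlam
    rwa [Algebra.algebraMap_eq_smul_one] at this
  set u : Aˣ := hu.unit with hudef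
  -- the scalar unit λ•1
  have hlu : IsUnit (lam • (1 : A)) := by
    rw [← Algebra.algebraMap_eq_smul_one]
    exact (isUnit_iff_ne_zero.mpr hlam0).map (algebraMap ℂ A)
  -- Step 1 : λ•1 ∈ connectedComponent 1, via exp path
  have step1 : hlu.unit ∈ connectedComponent (1 : Aˣ) := by
    refine units_path_mem_connectedComponent
      (fun s : ℝ => Complex.exp (s • Complex.log lam) • (1 : A)) ?_ ?_ 1 hlu.unit ?_ ?_
    · exact ((Complex.continuous_exp.comp (continuous_id.smul continuous_const)).smul
        continuous_const).continuousOn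
    · intro s _
      show IsUnit (Complex.exp (s • Complex.log lam) • (1 : A))
      rw [← Algebra.algebraMap_eq_smul_one]
      exact (isUnit_iff_ne_zero.mpr (Complex.exp_ne_zero _)).map (algebraMap ℂ A)
    · simp
    · show (hlu.unit : A) = Complex.exp ((1 : ℝ) • Complex.log lam) • (1 : A)
      rw [hlu.unit_spec, one_smul, Complex.exp_log hlam0]
  -- Step 2 : λ•1 - Q n ∈ connectedComponent 1, via straight-line path
  have step2 : ∀ n, (hQunit n 1).unit ∈ connectedComponent (1 : Aˣ) := by
    intro n
    have h2 : (hQunit n 1).unit ∈ connectedComponent hlu.unit := by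
      refine units_path_mem_connectedComponent
        (fun s : ℝ => lam • (1 : A) - (s : ℂ) • Q n) ?_ ?_ hlu.unit (hQunit n 1).unit ?_ ?_
      · exact (continuous_const.sub
          ((Complex.continuous_ofReal.smul continuous_const))).continuousOn
      · intro s _; exact hQunit n s
      · simp [hlu.unit_spec]
      · simp [(hQunit n 1).unit_spec]
    exact connectedComponent_mem_trans h2 step1
  -- Step 3 : pick n with Q n close to T, then λ•1 - T is connected to λ•1 - Q n
  have hpos : (0 : ℝ) < ‖((u⁻¹ : Aˣ) : A)‖⁻¹ := inv_pos.mpr (Units.norm_pos u⁻¹)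
  have hclose : ∀ᶠ n in Filter.atTop, ‖Q n - T‖ < ‖((u⁻¹ : Aˣ) : A)‖⁻¹ := by
    have := (hlim.sub_const T).norm
    rw [sub_self, norm_zero] at this
    exact this.eventually_lt_const hpos
  obtain ⟨N, hN⟩ := hclose.exists
  have step3 : (hQunit N 1).unit ∈ connectedComponent u := by
    refine units_path_mem_connectedComponent
      (fun s : ℝ => (u : A) + s • (T - Q N)) ?_ ?_ u (hQunit N 1).unit ?_ ?_
    · exact (continuous_const.add (continuous_id.smul continuous_const)).continuousOn
    · intro s hs
      refine (u.add (s • (T - Q N)) ?_).isUnit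
      calc ‖s • (T - Q N)‖ = |s| * ‖T - Q N‖ := by rw [norm_smul, Real.norm_eq_abs]
        _ ≤ 1 * ‖T - Q N‖ := by
            apply mul_le_mul_of_nonneg_right _ (norm_nonneg _)
            rw [abs_le]; exact ⟨by linarith [hs.1], hs.2⟩
        _ = ‖T - Q N‖ := one_mul _
        _ = ‖Q N - T‖ := by rw [← norm_neg, neg_sub]
        _ < _ := hN
    · simp
    · show ((hQunit N 1).unit : A) = (u : A) + (1 : ℝ) • (T - Q N)
      rw [(hQunit N 1).unit_spec, one_smul, one_smul]
      show lam • (1 : A) - Q N = (hu.unit : A) + (T - Q N)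
      rw [hu.unit_spec]
      abel
  refine ⟨u, hu.unit_spec, ?_⟩
  have h4 : connectedComponent u = connectedComponent (1 : Aˣ) := by
    rw [connectedComponent_eq step3, ← connectedComponent_eq (step2 N)]
  rw [← h4]
  exact mem_connectedComponent
end

section
/- Let 𝔄 be a unital C*-algebra and P ∈ 𝔄 a projection with P ≠ 0. Then dist(P, QuasiNil(𝔄)) ≥ 1/2, i.e. ‖P − Q‖ ≥ 1/2 for every quasinilpotent Q ∈ 𝔄. -/
open Filter

section Main

variable {A : Type*} [CStarAlgebra A] [PartialOrder A] [StarOrderedRing A]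

set_option linter.unusedSectionVars false

private lemma aux_smul_nonneg {c : ℝ} (hc : 0 ≤ c) {a : A} (ha : 0 ≤ a) :
    0 ≤ c • a := by
  rw [StarOrderedRing.nonneg_iff] at ha ⊢
  refine AddSubmonoid.closure_induction ?_ ?_ ?_ ha
  · rintro x ⟨y, rfl⟩
    apply AddSubmonoid.subset_closure
    refine ⟨Real.sqrt c • y, ?_⟩
    show star (Real.sqrt c • y) * (Real.sqrt c • y) = c • (star y * y)
    rw [star_smul, star_trivial, smul_mul_smul_comm, Real.mul_self_sqrt hc]
  · simpa only [smul_zero] using zero_mem _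
  · intro x y _ _ hx hy
    simpa only [smul_add] using add_mem hx hy

private lemma aux_smul_mono {c : ℝ} (hc : 0 ≤ c) {a b : A} (h : a ≤ b) :
    c • a ≤ c • b := by
  rw [← sub_nonneg, ← smul_sub]
  exact aux_smul_nonneg hc (sub_nonneg.2 h)

private lemma aux_pyth {P : A} (hsa : IsSelfAdjoint P) (hidem : IsIdempotentElem P)
    (a : A) :
    star (P * a) * (P * a) + star ((1 - P) * a) * ((1 - P) * a) = star a * a := by
  have h1 : (1 - P) * (1 - P) = 1 - P := by
    simp [mul_sub, sub_mul, hidem.eq]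
  have hsa1 : star (1 - P) = 1 - P := by
    simp [star_sub, hsa.star_eq]
  rw [star_mul, star_mul, hsa.star_eq, hsa1]
  calc star a * P * (P * a) + star a * (1 - P) * ((1 - P) * a)
      = star a * ((P * P) * a) + star a * (((1 - P) * (1 - P)) * a) := by
        simp only [mul_assoc]
    _ = star a * (P * a) + star a * ((1 - P) * a) := by rw [hidem.eq, h1]
    _ = star a * ((P + (1 - P)) * a) := by rw [add_mul, mul_add]
    _ = star a * a := by simp

private lemma aux_conj (Δ : A) (a : A) :
    star (Δ * a) * (Δ * a) ≤ (‖Δ‖ ^ 2) • (star a * a) := by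
  have h := CStarAlgebra.star_left_conjugate_le_norm_smul (a := a) (b := star Δ * Δ)
    (IsSelfAdjoint.star_mul_self Δ)
  have h2 : ‖star Δ * Δ‖ = ‖Δ‖ ^ 2 := by
    rw [CStarRing.norm_star_mul_self, sq]
  rw [h2] at h
  simpa only [star_mul, mul_assoc] using h

private lemma aux_lower (x u : A) :
    (1 / 2 : ℝ) • (star x * x) ≤ star (x + u) * (x + u) + star u * u := by
  have key : star (x + u) * (x + u) + star u * u
      = (1 / 2 : ℝ) • (star (x + (u + u)) * (x + (u + u))) + (1 / 2 : ℝ) • (star x * x) := by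
    simp only [star_add, add_mul, mul_add, smul_add]
    module
  rw [key]
  exact le_add_of_nonneg_left <|
    aux_smul_nonneg (by norm_num) (star_mul_self_nonneg _)

/-- The main induction. -/
private lemma aux_main {P Q : A}
    (hsa : IsSelfAdjoint P) (hidem : IsIdempotentElem P) {g : ℝ}
    (hg : g = 1 / 2 - 2 * ‖Q - P‖ ^ 2) (hgpos : 0 ≤ g) (n : ℕ) :
    star ((1 - P) * (Q ^ n * P)) * ((1 - P) * (Q ^ n * P))
        ≤ star (P * (Q ^ n * P)) * (P * (Q ^ n * P))
      ∧ (g ^ n) • P ≤ star (P * (Q ^ n * P)) * (P * (Q ^ n * P)) := by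
  set d : ℝ := ‖Q - P‖ with hd
  have hPpos : (0 : A) ≤ P := by
    have := star_mul_self_nonneg P
    rwa [hsa.star_eq, hidem.eq] at this
  induction n with
  | zero =>
    have hx0 : P * (Q ^ 0 * P) = P := by simp [hidem.eq]
    have hy0 : (1 - P) * (Q ^ 0 * P) = 0 := by
      simp [sub_mul, hidem.eq]
    rw [hx0, hy0, hsa.star_eq, hidem.eq]
    exact ⟨by simpa using hPpos, by simp⟩
  | succ n ih =>
    obtain ⟨K, J⟩ := ih
    set Δ : A := Q - P with hΔ
    set c : A := Q ^ n * P with hc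
    set x : A := P * c with hx
    set y : A := (1 - P) * c with hy
    set u : A := P * (Δ * c) with hu
    set v : A := (1 - P) * (Δ * c) with hv
    have hc1 : Q ^ (n + 1) * P = x + Δ * c := by
      rw [pow_succ', mul_assoc, ← hc]
      calc Q * c = (P + Δ) * c := by rw [hΔ]; congr 1; abel
        _ = x + Δ * c := by rw [add_mul, hx]
    have hX1 : P * (Q ^ (n + 1) * P) = x + u := by
      rw [hc1, mul_add, hu, hx, ← mul_assoc, hidem.eq]
    have hY1 : (1 - P) * (Q ^ (n + 1) * P) = v := by
      rw [hc1, mul_add, hv, hx, ← mul_assoc, sub_mul, one_mul, hidem.eq, sub_self, zero_mul,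
        zero_add]
    have hpyth_c : star x * x + star y * y = star c * c := aux_pyth hsa hidem c
    have hpyth_u : star u * u + star v * v = star (Δ * c) * (Δ * c) := aux_pyth hsa hidem (Δ * c)
    have huv : star u * u + star v * v ≤ (2 * d ^ 2) • (star x * x) := by
      calc star u * u + star v * v = star (Δ * c) * (Δ * c) := hpyth_u
        _ ≤ (d ^ 2) • (star c * c) := aux_conj Δ c
        _ = (d ^ 2) • (star x * x + star y * y) := by rw [hpyth_c]
        _ ≤ (d ^ 2) • (star x * x + star x * x) :=
            aux_smul_mono (sq_nonneg d) (add_le_add_right K _)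
        _ = (2 * d ^ 2) • (star x * x) := by module
    have low := aux_lower x u
    have step : star v * v + g • (star x * x) ≤ star (P * (Q ^ (n + 1) * P)) * (P * (Q ^ (n + 1) * P)) := by
      rw [hX1]
      have h3 : (1 / 2 : ℝ) • (star x * x) + star v * v
          ≤ star (x + u) * (x + u) + (2 * d ^ 2) • (star x * x) := by
        calc (1 / 2 : ℝ) • (star x * x) + star v * v
            ≤ (star (x + u) * (x + u) + star u * u) + star v * v := add_le_add_left low _
          _ = star (x + u) * (x + u) + (star u * u + star v * v) := by abel
          _ ≤ star (x + u) * (x + u) + (2 * d ^ 2) • (star x * x) := add_le_add_right huv _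
      have h4 := sub_le_sub_right h3 ((2 * d ^ 2) • (star x * x))
      have hgxx : star v * v + g • (star x * x)
          = (1 / 2 : ℝ) • (star x * x) + star v * v - (2 * d ^ 2) • (star x * x) := by
        rw [hg]
        module
      rw [hgxx]
      calc (1 / 2 : ℝ) • (star x * x) + star v * v - (2 * d ^ 2) • (star x * x)
          ≤ star (x + u) * (x + u) + (2 * d ^ 2) • (star x * x) - (2 * d ^ 2) • (star x * x) := h4
        _ = star (x + u) * (x + u) := by abel
    constructor
    · rw [hY1]
      refine le_trans ?_ step
      exact le_add_of_nonneg_right (aux_smul_nonneg hgpos (star_mul_self_nonneg x))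
    · refine le_trans ?_ step
      calc (g ^ (n + 1)) • P = g • ((g ^ n) • P) := by
            rw [smul_smul, pow_succ, mul_comm]
        _ ≤ g • (star x * x) := aux_smul_mono hgpos J
        _ ≤ star v * v + g • (star x * x) := le_add_of_nonneg_left (star_mul_self_nonneg v)

end Main


/-- In a unital C*-algebra, every nonzero projection is at distance at least `1/2`
from every quasinilpotent element. -/
theorem projection_dist_quasinilpotent_ge_half
    {A : Type*} [CStarAlgebra A] (P : A)
    (hsa : IsSelfAdjoint P) (hidem : IsIdempotentElem P) (hP : P ≠ 0)
    (Q : A) (hQ : spectrum ℂ Q = {0}) :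
    (1 : ℝ) / 2 ≤ ‖P - Q‖ := by
  by_contra hlt
  push_neg at hlt
  letI : PartialOrder A := CStarAlgebra.spectralOrder A
  haveI : StarOrderedRing A := CStarAlgebra.spectralOrderedRing A
  have hPpos : (0 : A) ≤ P := by
    have := star_mul_self_nonneg P
    rwa [hsa.star_eq, hidem.eq] at this
  have hPnorm : ‖P‖ = 1 := by
    have h1 : ‖P‖ * ‖P‖ = ‖P‖ := by
      rw [← CStarRing.norm_star_mul_self, hsa.star_eq, hidem.eq]
    have h2 : ‖P‖ ≠ 0 := norm_ne_zero_iff.mpr hP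
    field_simp at h1
    tauto
  set d : ℝ := ‖Q - P‖ with hd
  have hdlt : d < 1 / 2 := by rwa [hd, norm_sub_rev]
  have hd0 : 0 ≤ d := norm_nonneg _
  set g : ℝ := 1 / 2 - 2 * d ^ 2 with hg
  have hgpos : 0 < g := by
    have h14 : (0:ℝ) < 1 / 4 - d ^ 2 := by
      nlinarith [mul_pos (by linarith : (0:ℝ) < 1 / 2 - d) (by linarith : (0:ℝ) < 1 / 2 + d)]
    rw [hg]; linarith
  -- the key norm bound : g ^ n ≤ ‖Q ^ n‖ ^ 2
  have norm_bound : ∀ n : ℕ, g ^ n ≤ ‖Q ^ n‖ ^ 2 := by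
    intro n
    have h := (aux_main hsa hidem hg hgpos.le n).2
    have h0 : (0 : A) ≤ (g ^ n) • P :=
      aux_smul_nonneg (pow_nonneg hgpos.le n) hPpos
    have hnorm := CStarAlgebra.norm_le_norm_of_nonneg_of_le h0 h
    rw [norm_smul, Real.norm_of_nonneg (pow_nonneg hgpos.le n), hPnorm, mul_one,
      CStarRing.norm_star_mul_self] at hnorm
    have hXn : ‖P * (Q ^ n * P)‖ ≤ ‖Q ^ n‖ := by
      calc ‖P * (Q ^ n * P)‖ ≤ ‖P‖ * ‖Q ^ n * P‖ := norm_mul_le _ _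
        _ ≤ ‖P‖ * (‖Q ^ n‖ * ‖P‖) :=
            mul_le_mul_of_nonneg_left (norm_mul_le _ _) (norm_nonneg _)
        _ = ‖Q ^ n‖ := by rw [hPnorm]; ring
    nlinarith [norm_nonneg (P * (Q ^ n * P)), norm_nonneg (Q ^ n)]
  -- spectral radius of Q is zero
  have hrad : spectralRadius ℂ Q = 0 := by
    simp [spectralRadius, hQ]
  -- Gelfand's formula
  have gel := spectrum.pow_nnnorm_pow_one_div_tendsto_nhds_spectralRadius Q
  rw [hrad] at gel
  set s : ℝ := Real.sqrt g with hs
  have hspos : 0 < s := Real.sqrt_pos.2 hgpos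
  have hQn : ∀ n : ℕ, s ^ n ≤ ‖Q ^ n‖ := by
    intro n
    have h1 : (s ^ n) ^ 2 = g ^ n := by
      rw [← pow_mul, mul_comm, pow_mul, Real.sq_sqrt hgpos.le]
    have h2 : (s ^ n) ^ 2 ≤ ‖Q ^ n‖ ^ 2 := by rw [h1]; exact norm_bound n
    have h3 := Real.sqrt_le_sqrt h2
    rwa [Real.sqrt_sq (pow_nonneg hspos.le n), Real.sqrt_sq (norm_nonneg _)] at h3
  -- conclude via Gelfand
  have hge : ∀ᶠ n : ℕ in atTop, (s.toNNReal : ENNReal) ≤ (‖Q ^ n‖₊ : ENNReal) ^ (1 / (n : ℝ)) := by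
    filter_upwards [eventually_gt_atTop 0] with n hn
    have h1 : s.toNNReal ^ n ≤ ‖Q ^ n‖₊ := by
      rw [← Real.toNNReal_pow hspos.le]
      rw [← norm_toNNReal]
      exact Real.toNNReal_le_toNNReal (hQn n)
    have h1' : ((s.toNNReal : ENNReal)) ^ n ≤ (‖Q ^ n‖₊ : ENNReal) := by
      exact_mod_cast h1
    have hne : ((n : ℝ)) ≠ 0 := by positivity
    calc (s.toNNReal : ENNReal) = ((s.toNNReal : ENNReal) ^ n) ^ (1 / (n : ℝ)) := by
          rw [← ENNReal.rpow_natCast, ← ENNReal.rpow_mul, mul_one_div, div_self hne,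
            ENNReal.rpow_one]
      _ ≤ (‖Q ^ n‖₊ : ENNReal) ^ (1 / (n : ℝ)) := by
          exact ENNReal.rpow_le_rpow h1' (by positivity)
  have hfin : (s.toNNReal : ENNReal) ≤ 0 := ge_of_tendsto gel hge
  have : s.toNNReal = 0 := by simpa using hfin
  have : s ≤ 0 := by simpa [Real.toNNReal_eq_zero] using this
  linarith
end

section
/- For every n ∈ ℕ, any nilpotent matrix M ∈ M_n(ℂ) has trace zero; consequently, for the diagonal matrix A_n = diag(1/2ⁿ, 2/2ⁿ, …, 1) ∈ M_{2ⁿ}(ℂ), the distance (in operator norm) from A_n to the set of nilpotent 2ⁿ × 2ⁿ matrices satisfies liminf_{n→∞} dist(A_n, Nil(M_{2ⁿ}(ℂ))) ≥ 1/2. -/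
open scoped Matrix.Norms.L2Operator

lemma entry_norm_le_l2_opNorm {m : ℕ} (X : Matrix (Fin m) (Fin m) ℂ) (i : Fin m) :
    ‖X i i‖ ≤ ‖X‖ := by
  set x : EuclideanSpace ℂ (Fin m) := EuclideanSpace.single i (1:ℂ) with hx
  set y : EuclideanSpace ℂ (Fin m) := (EuclideanSpace.equiv (Fin m) ℂ).symm (X.mulVec x)
  have h1 : X i i = inner (𝕜 := ℂ) x y := by
    rw [EuclideanSpace.inner_single_left]
    simp [y, x, Matrix.mulVec, dotProduct, EuclideanSpace.single_apply]
  have h2 : ‖X i i‖ ≤ ‖x‖ * ‖y‖ := h1 ▸ norm_inner_le_norm x y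
  have h3 : ‖y‖ ≤ ‖X‖ * ‖x‖ := X.l2_opNorm_mulVec x
  have h4 : ‖x‖ = 1 := by simp [x, EuclideanSpace.norm_single]
  rw [h4, one_mul] at h2
  rw [h4, mul_one] at h3
  linarith

lemma trace_norm_le_l2_opNorm {m : ℕ} (X : Matrix (Fin m) (Fin m) ℂ) :
    ‖Matrix.trace X‖ ≤ m * ‖X‖ := by
  calc ‖Matrix.trace X‖ ≤ ∑ i : Fin m, ‖X i i‖ := norm_sum_le _ _
    _ ≤ Finset.univ.card • ‖X‖ :=
        Finset.sum_le_card_nsmul _ _ _ fun i _ => entry_norm_le_l2_opNorm X i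
    _ = m * ‖X‖ := by simp [mul_comm]

lemma sum_div_gauss (m : ℕ) (hm : m ≠ 0) :
    (∑ j : Fin m, (((j : ℕ) + 1 : ℕ) : ℂ) / (m : ℂ)) = ((m + 1 : ℕ) : ℂ) / 2 := by
  have hm0 : (m : ℂ) ≠ 0 := Nat.cast_ne_zero.mpr hm
  rw [← Finset.sum_div]
  have hsum : (∑ j : Fin m, ((j : ℕ) + 1)) = ∑ i ∈ Finset.range (m + 1), i := by
    rw [Finset.sum_range_succ', Fin.sum_univ_eq_sum_range (fun i => i + 1) m]; simp
  have hN : (∑ i ∈ Finset.range (m + 1), i) * 2 = (m + 1) * m :=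
    Finset.sum_range_id_mul_two (m + 1)
  have h1 : (∑ j : Fin m, (((j : ℕ) + 1 : ℕ) : ℂ)) = ((∑ i ∈ Finset.range (m + 1), i : ℕ) : ℂ) := by
    rw [← hsum]; push_cast; ring
  rw [h1, div_eq_div_iff hm0 two_ne_zero]
  have h2 := congrArg (Nat.cast : ℕ → ℂ) hN
  push_cast at h2 ⊢
  linear_combination h2

lemma trace_diag (n : ℕ) :
    Matrix.trace (Matrix.diagonal (fun j : Fin (2 ^ n) => (((j : ℕ) + 1 : ℕ) : ℂ) / (2 ^ n : ℂ)))
      = ((2 ^ n + 1 : ℕ) : ℂ) / 2 := by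
  rw [Matrix.trace_diagonal]
  have := sum_div_gauss (2 ^ n) (by positivity)
  push_cast at this ⊢
  exact this

lemma l2_opNorm_diagonal_le {m : ℕ} (v : Fin m → ℂ) (hv : ∀ i, ‖v i‖ ≤ 1) :
    ‖Matrix.diagonal v‖ ≤ 1 := by
  rw [Matrix.cstar_norm_def]
  apply ContinuousLinearMap.opNorm_le_bound _ zero_le_one
  intro x
  rw [one_mul]
  have key : (Matrix.toEuclideanCLM (𝕜 := ℂ) (Matrix.diagonal v)) x = fun i => v i * x i := by
    ext i
    have h2 := congrFun (Matrix.ofLp_toEuclideanCLM (𝕜 := ℂ) (Matrix.diagonal v) x) i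
    simpa [Matrix.toLin'_apply, Matrix.mulVec_diagonal] using h2
  rw [EuclideanSpace.norm_eq, EuclideanSpace.norm_eq, key]
  apply Real.sqrt_le_sqrt
  apply Finset.sum_le_sum
  intro i _
  have h1 : ‖v i * x i‖ ≤ ‖x i‖ := by
    rw [norm_mul]
    calc ‖v i‖ * ‖x i‖ ≤ 1 * ‖x i‖ := by gcongr; exact hv i
      _ = ‖x i‖ := one_mul _
  exact pow_le_pow_left₀ (norm_nonneg _) h1 2

/-- Nilpotent complex matrices have trace zero; consequently, for the diagonal
matrices `A_n = diag(1/2ⁿ, 2/2ⁿ, …, 1) ∈ M_{2ⁿ}(ℂ)` the distance (in operator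
norm) to the nilpotent matrices satisfies `liminf dist(A_n, Nil) ≥ 1/2`. -/
theorem liminf_dist_diag_nilpotent_ge_half :
    (∀ (n : ℕ) (M : Matrix (Fin n) (Fin n) ℂ), IsNilpotent M → Matrix.trace M = 0) ∧
    (1 / 2 : ℝ) ≤ Filter.liminf
      (fun n : ℕ =>
        Metric.infDist
          (Matrix.diagonal (fun j : Fin (2 ^ n) => (((j : ℕ) + 1 : ℕ) : ℂ) / (2 ^ n : ℂ)))
          {M : Matrix (Fin (2 ^ n)) (Fin (2 ^ n)) ℂ | IsNilpotent M})
      Filter.atTop := by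
  have htr : ∀ (n : ℕ) (M : Matrix (Fin n) (Fin n) ℂ), IsNilpotent M → Matrix.trace M = 0 :=
    fun n M h => (Matrix.isNilpotent_trace_of_isNilpotent h).eq_zero
  refine ⟨htr, ?_⟩
  set u : ℕ → ℝ := fun n : ℕ =>
    Metric.infDist
      (Matrix.diagonal (fun j : Fin (2 ^ n) => (((j : ℕ) + 1 : ℕ) : ℂ) / (2 ^ n : ℂ)))
      {M : Matrix (Fin (2 ^ n)) (Fin (2 ^ n)) ℂ | IsNilpotent M} with hu
  have hlow : ∀ n, (1 / 2 : ℝ) ≤ u n := by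
    intro n
    set A : Matrix (Fin (2 ^ n)) (Fin (2 ^ n)) ℂ :=
      Matrix.diagonal (fun j : Fin (2 ^ n) => (((j : ℕ) + 1 : ℕ) : ℂ) / (2 ^ n : ℂ)) with hA
    have hS : Set.Nonempty {M : Matrix (Fin (2 ^ n)) (Fin (2 ^ n)) ℂ | IsNilpotent M} :=
      ⟨0, IsNilpotent.zero⟩
    have hdist : ∀ M ∈ {M : Matrix (Fin (2 ^ n)) (Fin (2 ^ n)) ℂ | IsNilpotent M},
        (1 / 2 : ℝ) ≤ dist A M := by
      intro M hM
      have htrAM : Matrix.trace (A - M) = ((2 ^ n + 1 : ℕ) : ℂ) / 2 := by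
        rw [Matrix.trace_sub, htr _ M hM, sub_zero, hA, trace_diag]
      have hnorm : ‖Matrix.trace (A - M)‖ = ((2 ^ n : ℝ) + 1) / 2 := by
        rw [htrAM]
        rw [norm_div, RCLike.norm_natCast]
        push_cast
        norm_num
      have hle : ‖Matrix.trace (A - M)‖ ≤ ((2 ^ n : ℕ) : ℝ) * ‖A - M‖ :=
        trace_norm_le_l2_opNorm (A - M)
      push_cast at hle
      rw [dist_eq_norm]
      have hpow : (0 : ℝ) < 2 ^ n := by positivity
      rw [hnorm] at hle
      nlinarith [hpow]
    by_contra hcon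
    push_neg at hcon
    obtain ⟨M, hM, hMd⟩ := (Metric.infDist_lt_iff hS).mp hcon
    exact absurd hMd (not_lt.mpr (hdist M hM))
  have hupp : ∀ n, u n ≤ 1 := by
    intro n
    calc u n ≤ dist (Matrix.diagonal
          (fun j : Fin (2 ^ n) => (((j : ℕ) + 1 : ℕ) : ℂ) / (2 ^ n : ℂ))) 0 :=
          Metric.infDist_le_dist_of_mem (by exact IsNilpotent.zero)
      _ = ‖Matrix.diagonal
          (fun j : Fin (2 ^ n) => (((j : ℕ) + 1 : ℕ) : ℂ) / (2 ^ n : ℂ))‖ := dist_zero_right _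
      _ ≤ 1 := by
          apply l2_opNorm_diagonal_le
          intro i
          rw [norm_div]
          have h1 : ‖(((i : ℕ) + 1 : ℕ) : ℂ)‖ = ((i : ℕ) + 1 : ℝ) := by
            rw [RCLike.norm_natCast]
            push_cast
            ring
          have h2 : ‖((2 ^ n : ℂ))‖ = (2 ^ n : ℝ) := by
            norm_num
          rw [h1, h2, div_le_one (by positivity)]
          have := i.isLt
          push_cast
          have : ((i : ℕ) : ℝ) + 1 ≤ (2 ^ n : ℝ) := by
            have h3 : (i : ℕ) + 1 ≤ 2 ^ n := i.isLt
            exact_mod_cast h3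
          linarith
  apply Filter.le_liminf_of_le
  · exact Filter.isCoboundedUnder_ge_of_le _ hupp
  · exact Filter.Eventually.of_forall hlow
end

section
/- Let 𝔄 be an AF C*-algebra, written as the closure of an increasing union of finite-dimensional C*-subalgebras 𝔄_k. If T ∈ 𝔄 is a norm limit of quasinilpotent elements of 𝔄, then T is a norm limit of nilpotent elements belonging to the subalgebras 𝔄_k. -/
open Polynomial

namespace AFNil

variable {A : Type*} [CStarAlgebra A]


lemma aeval_mem (S : StarSubalgebra ℂ A) {a : A} (ha : a ∈ S) (f : ℂ[X]) :
    Polynomial.aeval a f ∈ S := by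
  rw [Polynomial.aeval_eq_sum_range]
  exact sum_mem fun i _ => SMulMemClass.smul_mem _ (pow_mem ha i)



lemma star_aeval {h : A} (hsa : star h = h) (f : ℂ[X]) :
    star (Polynomial.aeval h f) = Polynomial.aeval h (f.map (starRingEnd ℂ)) := by
  induction f using Polynomial.induction_on' with
  | add p q hp hq => rw [map_add, star_add, hp, hq, Polynomial.map_add, map_add]
  | monomial n c =>
      rw [Polynomial.aeval_monomial, Polynomial.map_monomial, Polynomial.aeval_monomial,
        star_mul, star_pow, hsa]
      rw [← algebraMap_star_comm, Algebra.commutes]; rfl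


lemma aeval_eq_zero_of_vanish [Nontrivial A] {h : A} (hsa : star h = h) (f : ℂ[X])
    (hf : ∀ μ ∈ spectrum ℂ h, f.eval μ = 0) : Polynomial.aeval h f = 0 := by
  set y := Polynomial.aeval h f with hy
  have hnorm : IsStarNormal y := by
    constructor
    rw [Commute, SemiconjBy, hy, star_aeval hsa, ← map_mul, ← map_mul, mul_comm]
  have hspec : spectrum ℂ y = (fun μ => f.eval μ) '' spectrum ℂ h :=
    spectrum.map_polynomial_aeval_of_nonempty h f (spectrum.nonempty h)
  have hzero : spectrum ℂ y = {0} := by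
    rw [hspec]
    apply Set.eq_of_subset_of_subset
    · rintro z ⟨μ, hμ, rfl⟩; simp [hf μ hμ]
    · rintro z (rfl : z = 0)
      obtain ⟨μ, hμ⟩ := spectrum.nonempty h
      exact ⟨μ, hμ, (hf μ hμ)⟩
  have hr : spectralRadius ℂ y = 0 := by
    rw [spectralRadius, hzero]
    simp
  have := IsStarNormal.spectralRadius_eq_nnnorm y
  rw [hr] at this
  have : ‖y‖₊ = 0 := by exact_mod_cast this.symm
  simpa [norm_eq_zero, ← nnnorm_eq_zero] using this


lemma eval_map_conj (g : ℂ[X]) (μ : ℂ) :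
    (g.map (starRingEnd ℂ)).eval μ = (starRingEnd ℂ) (g.eval ((starRingEnd ℂ) μ)) := by
  conv_lhs => rw [show μ = (starRingEnd ℂ) ((starRingEnd ℂ) μ) by simp]
  rw [Polynomial.eval_map, Polynomial.eval₂_hom]



lemma support_proj (S : StarSubalgebra ℂ A) (hfd : FiniteDimensional ℂ S) [Nontrivial A]
    {h : A} (hh : h ∈ S) (hsa : star h = h) :
    ∃ q w : A, q ∈ S ∧ w ∈ S ∧ star q = q ∧ q * q = q ∧ q * h = h ∧ h * q = h ∧
      q = h * w ∧ q = w * h := by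
  haveI := hfd
  set hS : ↥S := ⟨h, hh⟩ with hhS
  have hint : IsIntegral ℂ hS := Algebra.IsIntegral.isIntegral _
  set π := minpoly ℂ hS with hπ
  have hπ0 : π ≠ 0 := minpoly.ne_zero hint
  have hπa : Polynomial.aeval h π = 0 := by
    have h1 := minpoly.aeval ℂ hS
    have h2 := Polynomial.aeval_algHom_apply (S.toSubalgebra.val) hS π
    rw [h1] at h2
    simpa using h2
  have hroots : ∀ μ ∈ spectrum ℂ h, π.eval μ = 0 := by
    intro μ hμ
    have := spectrum.subset_polynomial_aeval h π ⟨μ, hμ, rfl⟩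
    rw [hπa] at this
    simpa [spectrum.zero_eq] using this
  classical
  set Z : Finset ℂ := insert 0 π.roots.toFinset with hZ
  set v : ℂ → ℂ := fun z => if z = 0 then 0 else 1 with hv
  set g : ℂ[X] := Lagrange.interpolate Z id v with hg
  have hg0 : g.eval 0 = 0 := by
    have := Lagrange.eval_interpolate_at_node v (Set.injOn_id _) (show (0:ℂ) ∈ Z from Finset.mem_insert_self 0 _)
    simpa only [id_eq, hv, if_pos rfl] using this
  have hg1 : ∀ μ ∈ spectrum ℂ h, μ ≠ 0 → g.eval μ = 1 := by
    intro μ hμ hne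
    have hmem : μ ∈ Z := Finset.mem_insert_of_mem (by
      rw [Multiset.mem_toFinset, Polynomial.mem_roots hπ0]
      exact hroots μ hμ)
    have := Lagrange.eval_interpolate_at_node v (Set.injOn_id _) hmem
    simpa only [id_eq, hv, if_neg hne] using this
  have hgval : ∀ μ ∈ spectrum ℂ h, g.eval μ = 0 ∨ g.eval μ = 1 := by
    intro μ hμ
    by_cases hne : μ = 0
    · left; rw [hne]; exact hg0
    · right; exact hg1 μ hμ hne
  obtain ⟨g₁, hg₁⟩ : (X : ℂ[X]) ∣ g := (Polynomial.X_dvd_iff).mpr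
    (by rw [Polynomial.coeff_zero_eq_eval_zero]; exact hg0)
  set q : A := Polynomial.aeval h g with hq
  set w : A := Polynomial.aeval h g₁ with hw
  have hrealspec : ∀ μ ∈ spectrum ℂ h, (starRingEnd ℂ) μ = μ := by
    intro μ hμ
    have : μ = (μ.re : ℂ) := IsSelfAdjoint.mem_spectrum_eq_re hsa hμ
    rw [this]; simp
  have hqstar : star q = q := by
    rw [hq, star_aeval hsa]
    have : Polynomial.aeval h (g.map (starRingEnd ℂ) - g) = 0 := by
      apply aeval_eq_zero_of_vanish hsa
      intro μ hμ
      rw [Polynomial.eval_sub, eval_map_conj, hrealspec μ hμ]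
      rcases hgval μ hμ with h0 | h1
      · rw [h0]; simp
      · rw [h1]; simp
    rw [map_sub, sub_eq_zero] at this
    rw [this]
  have hqq : q * q = q := by
    have : Polynomial.aeval h (g * g - g) = 0 := by
      apply aeval_eq_zero_of_vanish hsa
      intro μ hμ
      rcases hgval μ hμ with h0 | h0 <;> simp [h0]
    rw [map_sub, map_mul, sub_eq_zero] at this
    rw [this]
  have hqh : q * h = h := by
    have : Polynomial.aeval h (g * X - X) = 0 := by
      apply aeval_eq_zero_of_vanish hsa
      intro μ hμ
      by_cases hne : μ = 0
      · simp [hne]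
      · simp [hg1 μ hμ hne]
    rw [map_sub, map_mul, Polynomial.aeval_X, sub_eq_zero] at this
    rw [this]
  have hhq : h * q = h := by
    have : Polynomial.aeval h (X * g - X) = 0 := by
      apply aeval_eq_zero_of_vanish hsa
      intro μ hμ
      by_cases hne : μ = 0
      · simp [hne]
      · simp [hg1 μ hμ hne]
    rw [map_sub, map_mul, Polynomial.aeval_X, sub_eq_zero] at this
    rw [this]
  refine ⟨q, w, aeval_mem S hh g, aeval_mem S hh g₁, hqstar, hqq, hqh, hhq, ?_, ?_⟩
  · rw [hq, hg₁, map_mul, Polynomial.aeval_X]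
  · rw [hq, hg₁, mul_comm (X : ℂ[X]) g₁, map_mul, Polynomial.aeval_X]


/-- The `p`-corner of the subalgebra `S`, as a submodule of `A`. -/
def corner (S : StarSubalgebra ℂ A) (p : A) : Submodule ℂ A where
  carrier := {x | x ∈ S ∧ p * x * p = x}
  add_mem' := fun ha hb => ⟨add_mem ha.1 hb.1, by rw [mul_add, add_mul, ha.2, hb.2]⟩
  zero_mem' := ⟨zero_mem _, by rw [mul_zero, zero_mul]⟩
  smul_mem' := fun c x hx =>
    ⟨SMulMemClass.smul_mem c hx.1, by rw [mul_smul_comm, smul_mul_assoc, hx.2]⟩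

variable {S : StarSubalgebra ℂ A} {p : A}

lemma corner_left (hp : p * p = p) {x : A} (hx : x ∈ corner S p) : p * x = x := by
  conv_lhs => rw [← hx.2]
  rw [← mul_assoc, ← mul_assoc, hp]
  exact hx.2

lemma corner_right (hp : p * p = p) {x : A} (hx : x ∈ corner S p) : x * p = x := by
  conv_lhs => rw [← hx.2]
  rw [mul_assoc, hp]
  exact hx.2

lemma corner_mul (hp : p * p = p) {x y : A} (hx : x ∈ corner S p) (hy : y ∈ corner S p) :
    x * y ∈ corner S p := by
  refine ⟨mul_mem hx.1 hy.1, ?_⟩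
  rw [← mul_assoc, corner_left hp hx, mul_assoc, corner_right hp hy]

lemma corner_fd (hfd : FiniteDimensional ℂ S) (p : A) : FiniteDimensional ℂ (corner S p) := by
  haveI : FiniteDimensional ℂ (Subalgebra.toSubmodule S.toSubalgebra) := hfd
  exact Submodule.finiteDimensional_of_le (S₂ := Subalgebra.toSubmodule S.toSubalgebra)
    (fun x hx => hx.1)

/-- Two-sided invertibility in the corner. -/
def CUnit (S : StarSubalgebra ℂ A) (p b : A) (lam : ℂ) : Prop :=
  ∃ c ∈ corner S p, c * (b - lam • p) = p ∧ (b - lam • p) * c = p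

lemma cunit_of_left (hfd : FiniteDimensional ℂ S) (hp : p * p = p) (hpc : p ∈ corner S p)
    {z : A} (hz : z ∈ corner S p) {c : A} (hc : c ∈ corner S p) (hcz : c * z = p) :
    ∃ c' ∈ corner S p, c' * z = p ∧ z * c' = p := by
  haveI := corner_fd hfd p
  set L : corner S p →ₗ[ℂ] corner S p :=
    { toFun := fun y => ⟨z * y.1, corner_mul hp hz y.2⟩
      map_add' := fun y₁ y₂ => by ext; simp [mul_add]
      map_smul' := fun c y => by ext; simp [mul_smul_comm] } with hL
  have hinj : Function.Injective L := by
    intro y₁ y₂ hyeq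
    have h1 : z * y₁.1 = z * y₂.1 := congrArg Subtype.val hyeq
    apply Subtype.ext
    calc (y₁ : A) = p * y₁.1 := (corner_left hp y₁.2).symm
      _ = c * (z * y₁.1) := by rw [← mul_assoc, hcz]
      _ = c * (z * y₂.1) := by rw [h1]
      _ = p * y₂.1 := by rw [← mul_assoc, hcz]
      _ = y₂.1 := corner_left hp y₂.2
  have hsurj : Function.Surjective L := (LinearMap.injective_iff_surjective).mp hinj
  obtain ⟨c₁, hc₁⟩ := hsurj ⟨p, hpc⟩
  have hzc₁ : z * c₁.1 = p := congrArg Subtype.val hc₁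
  have hcc₁ : c = c₁.1 := by
    calc c = c * p := (corner_right hp hc).symm
      _ = c * (z * c₁.1) := by rw [hzc₁]
      _ = (c * z) * c₁.1 := by rw [mul_assoc]
      _ = p * c₁.1 := by rw [hcz]
      _ = c₁.1 := corner_left hp c₁.2
  exact ⟨c₁.1, c₁.2, by rw [← hcc₁]; exact hcz, hzc₁⟩

lemma cunit_of_right (hfd : FiniteDimensional ℂ S) (hp : p * p = p) (hpc : p ∈ corner S p)
    {z : A} (hz : z ∈ corner S p) {c : A} (hc : c ∈ corner S p) (hcz : z * c = p) :
    ∃ c' ∈ corner S p, c' * z = p ∧ z * c' = p := by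
  haveI := corner_fd hfd p
  set R : corner S p →ₗ[ℂ] corner S p :=
    { toFun := fun y => ⟨y.1 * z, corner_mul hp y.2 hz⟩
      map_add' := fun y₁ y₂ => by ext; simp [add_mul]
      map_smul' := fun c y => by ext; simp [smul_mul_assoc] } with hR
  have hinj : Function.Injective R := by
    intro y₁ y₂ hyeq
    have h1 : y₁.1 * z = y₂.1 * z := congrArg Subtype.val hyeq
    apply Subtype.ext
    calc (y₁ : A) = y₁.1 * p := (corner_right hp y₁.2).symm
      _ = (y₁.1 * z) * c := by rw [mul_assoc, hcz]
      _ = (y₂.1 * z) * c := by rw [h1]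
      _ = y₂.1 * p := by rw [mul_assoc, hcz]
      _ = y₂.1 := corner_right hp y₂.2
  have hsurj : Function.Surjective R := (LinearMap.injective_iff_surjective).mp hinj
  obtain ⟨c₂, hc₂⟩ := hsurj ⟨p, hpc⟩
  have hzc₂ : c₂.1 * z = p := congrArg Subtype.val hc₂
  have hcc₂ : c = c₂.1 := by
    calc c = p * c := (corner_left hp hc).symm
      _ = (c₂.1 * z) * c := by rw [hzc₂]
      _ = c₂.1 * (z * c) := by rw [mul_assoc]
      _ = c₂.1 * p := by rw [hcz]
      _ = c₂.1 := corner_right hp c₂.2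
  exact ⟨c₂.1, c₂.2, hzc₂, by rw [← hcc₂]; exact hcz⟩


lemma exists_eigen (hfd : FiniteDimensional ℂ S) [Nontrivial A]
    (hpc : p ∈ corner S p) (hp : p * p = p) (hp0 : p ≠ 0) {b : A} (hb : b ∈ corner S p) :
    ∃ (lam : ℂ) (x : A), x ∈ corner S p ∧ x ≠ 0 ∧ x * b = lam • x ∧ ¬ CUnit S p b lam := by
  haveI := hfd
  set bS : ↥S := ⟨b, hb.1⟩ with hbS
  have hint : IsIntegral ℂ bS := Algebra.IsIntegral.isIntegral _
  set π := minpoly ℂ bS with hπdef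
  have hmon : π.Monic := minpoly.monic hint
  have hπa : Polynomial.aeval b π = 0 := by
    have h1 := minpoly.aeval ℂ bS
    have h2 := Polynomial.aeval_algHom_apply (S.toSubalgebra.val) bS π
    rw [h1] at h2
    simpa using h2
  set L : List ℂ := π.roots.toList with hLdef
  have hπprod : π = (L.map (fun a => X - C a)).prod := by
    conv_lhs => rw [Polynomial.Splits.eq_prod_roots_of_monic
      (IsAlgClosed.splits π) hmon]
    rw [hLdef, ← Multiset.coe_toList π.roots, Multiset.map_coe, Multiset.prod_coe,
      Multiset.coe_toList]
  have hprod : (L.map (fun a => b - a • (1 : A))).prod = 0 := by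
    have h3 : Polynomial.aeval b ((L.map (fun a => X - C a)).prod) = 0 := by
      rw [← hπprod]; exact hπa
    rw [map_list_prod, List.map_map] at h3
    have hfun : ((Polynomial.aeval b) ∘ (fun a : ℂ => X - C a)) = fun a : ℂ => b - a • 1 := by
      funext a
      simp [Algebra.algebraMap_eq_smul_one]
    rwa [hfun] at h3
  have hps : ∀ l : List ℂ, p * ((l.map (fun a => b - a • p)).prod * p)
      = (l.map (fun a => b - a • p)).prod * p := by
    intro l
    induction l with
    | nil => simp [hp]
    | cons a t ih =>
      simp only [List.map_cons, List.prod_cons]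
      have hfac : p * (b - a • p) = b - a • p := by
        rw [mul_sub, corner_left hp hb, mul_smul_comm, hp]
      rw [mul_assoc (b - a • p) _ p, ← mul_assoc p (b - a • p) _, hfac]
  have hconv : ∀ l : List ℂ, ((l.map (fun a => b - a • (1:A))).prod) * p
      = ((l.map (fun a => b - a • p)).prod) * p := by
    intro l
    induction l with
    | nil => rfl
    | cons a t ih =>
      simp only [List.map_cons, List.prod_cons]
      rw [mul_assoc, ih, mul_assoc]
      have hy := hps t
      set y := (t.map (fun a => b - a • p)).prod * p with hydef
      calc (b - a • (1:A)) * y = b * y - a • y := by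
            rw [sub_mul, smul_mul_assoc, one_mul]
        _ = b * y - a • (p * y) := by rw [hy]
        _ = (b - a • p) * y := by rw [sub_mul, smul_mul_assoc]
  have hzero : ((L.map (fun a => b - a • p)).prod) * p = 0 := by
    rw [← hconv, hprod, zero_mul]
  have hbad : ∃ lam ∈ L, ¬ ∃ c ∈ corner S p, c * (b - lam • p) = p := by
    by_contra hcon
    push_neg at hcon
    have hdesc : ∀ l : List ℂ, (∀ lam ∈ l, ∃ c ∈ corner S p, c * (b - lam • p) = p) →
        ((l.map (fun a => b - a • p)).prod) * p = 0 → p = 0 := by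
      intro l
      induction l with
      | nil => intro _ h0; simpa using h0
      | cons a t ih =>
        intro hall h0
        obtain ⟨c, hc, hcz⟩ := hall a List.mem_cons_self
        simp only [List.map_cons, List.prod_cons] at h0
        rw [mul_assoc] at h0
        have h1 : c * ((b - a • p) * ((t.map (fun a => b - a • p)).prod * p)) = 0 := by
          rw [h0, mul_zero]
        rw [← mul_assoc, hcz, hps t] at h1
        exact ih (fun lam hl => hall lam (List.mem_cons_of_mem a hl)) h1
    exact hp0 (hdesc L (fun lam hl => by
      obtain ⟨c, hc, h⟩ := hcon lam hl
      exact ⟨c, hc, h⟩) hzero)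
  obtain ⟨lam, hlamL, hnc⟩ := hbad
  have hzc : (b - lam • p) ∈ corner S p := sub_mem hb (Submodule.smul_mem _ lam hpc)
  haveI := corner_fd hfd p
  set R : corner S p →ₗ[ℂ] corner S p :=
    { toFun := fun y => ⟨y.1 * (b - lam • p), corner_mul hp y.2 hzc⟩
      map_add' := fun y₁ y₂ => by ext; simp [add_mul]
      map_smul' := fun c y => by ext; simp [smul_mul_assoc] } with hR
  have hninj : ¬ Function.Injective R := by
    intro hinj
    obtain ⟨c₁, hc₁⟩ := (LinearMap.injective_iff_surjective).mp hinj ⟨p, hpc⟩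
    exact hnc ⟨c₁.1, c₁.2, congrArg Subtype.val hc₁⟩
  have hker : ¬ ∀ x : corner S p, R x = 0 → x = 0 := by
    intro hk
    exact hninj (LinearMap.ker_eq_bot.mp (LinearMap.ker_eq_bot'.mpr hk))
  push_neg at hker
  obtain ⟨x, hx0, hxne⟩ := hker
  have hxz : x.1 * (b - lam • p) = 0 := congrArg Subtype.val hx0
  refine ⟨lam, x.1, x.2, fun h => hxne (Subtype.ext h), ?_, ?_⟩
  · have : x.1 * b - lam • x.1 = 0 := by
      rw [mul_sub, mul_smul_comm, corner_right hp x.2] at hxz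
      exact hxz
    exact sub_eq_zero.mp this
  · rintro ⟨c, hc, hcl, _⟩
    exact hnc ⟨c, hc, hcl⟩


/-- The transfer of non-invertibility from the reduced corner back to the original corner. -/
lemma cunit_descend (hfd : FiniteDimensional ℂ S) (hpS : p ∈ S) (hp : p * p = p)
    {b q : A} (hb : b ∈ corner S p) (hq : q ∈ corner S p) (hqq : q * q = q) {lam0 : ℂ}
    (hqb : q * b = lam0 • q) (μ : ℂ) (h : CUnit S p b μ) :
    CUnit S (p - q) ((p - q) * b * (p - q)) μ := by
  obtain ⟨c, hc, hcl, hcr⟩ := h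
  have hpq : p * q = q := corner_left hp hq
  have hqp : q * p = q := corner_right hp hq
  set p' := p - q with hp'
  have hp'p' : p' * p' = p' := by
    rw [hp', sub_mul, mul_sub, mul_sub, hp, hpq, hqp, hqq]
    abel
  have hqp' : q * p' = 0 := by rw [hp', mul_sub, hqp, hqq, sub_self]
  have hp'q : p' * q = 0 := by rw [hp', sub_mul, hpq, hqq, sub_self]
  have hpp' : p * p' = p' := by rw [hp', mul_sub, hp, hpq]
  have hp'p : p' * p = p' := by rw [hp', sub_mul, hp, hqp]
  have hp'S : p' ∈ S := sub_mem hpS hq.1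
  have hp'c : p' ∈ corner S p' := ⟨hp'S, by rw [hp'p', hp'p']⟩
  set b' := p' * b * p' with hb'
  have hb'S : b' ∈ S := mul_mem (mul_mem hp'S hb.1) hp'S
  have hb'c : b' ∈ corner S p' := ⟨hb'S, by
    rw [hb', ← mul_assoc, ← mul_assoc, hp'p', mul_assoc (p' * b), hp'p', mul_assoc]⟩
  set z' := b' - μ • p' with hz'
  have hz'c : z' ∈ corner S p' := sub_mem hb'c (Submodule.smul_mem _ μ hp'c)
  -- the key: elements of corner p' killed by z' are killed by b - μ • p
  have hkey : ∀ y : A, y ∈ corner S p' → z' * y = (b - μ • p) * y := by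
    intro y hy
    have hp'y : p' * y = y := corner_left hp'p' hy
    have hpy : p * y = y := by
      conv_lhs => rw [← hp'y]
      rw [← mul_assoc, hpp', hp'y]
    have hqy : q * y = 0 := by
      conv_lhs => rw [← hp'y, ← mul_assoc, hqp']
      rw [zero_mul]
    have hby : b * y = p' * (b * y) := by
      have h1 : b * y = p * (b * y) := by
        rw [← mul_assoc, corner_left hp hb]
      have h2 : p * (b * y) = q * (b * y) + p' * (b * y) := by
        have hsum : p = q + p' := by rw [hp']; abel
        conv_lhs => rw [hsum]
        rw [add_mul]
      have h3 : q * (b * y) = 0 := by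
        rw [← mul_assoc, hqb, smul_mul_assoc, hqy, smul_zero]
      conv_lhs => rw [h1, h2, h3]
      rw [zero_add]
    calc z' * y = b' * y - μ • (p' * y) := by
          rw [hz', sub_mul, smul_mul_assoc]
      _ = p' * (b * (p' * y)) - μ • y := by
          rw [hb', hp'y, mul_assoc, mul_assoc, hp'y]
      _ = b * y - μ • (p * y) := by rw [hp'y, ← hby, hpy]
      _ = (b - μ • p) * y := by rw [sub_mul, smul_mul_assoc]
  -- injectivity of left multiplication by z' on corner p'
  haveI := corner_fd hfd p'
  set L : corner S p' →ₗ[ℂ] corner S p' :=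
    { toFun := fun y => ⟨z' * y.1, corner_mul hp'p' hz'c y.2⟩
      map_add' := fun y₁ y₂ => by ext; simp [mul_add]
      map_smul' := fun a y => by ext; simp [mul_smul_comm] } with hL
  have hinj : Function.Injective L := by
    rw [← LinearMap.ker_eq_bot, LinearMap.ker_eq_bot']
    intro y hy0
    have h0 : z' * y.1 = 0 := congrArg Subtype.val hy0
    rw [hkey y.1 y.2] at h0
    apply Subtype.ext
    have : p * y.1 = y.1 := by
      have hp'y : p' * y.1 = y.1 := corner_left hp'p' y.2
      conv_lhs => rw [← hp'y]
      rw [← mul_assoc, hpp', hp'y]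
    calc (y : A) = p * y.1 := this.symm
      _ = (c * (b - μ • p)) * y.1 := by rw [hcl]
      _ = c * ((b - μ • p) * y.1) := by rw [mul_assoc]
      _ = 0 := by rw [h0, mul_zero]
  obtain ⟨c₁, hc₁⟩ := (LinearMap.injective_iff_surjective).mp hinj ⟨p', hp'c⟩
  have hzc₁ : z' * c₁.1 = p' := congrArg Subtype.val hc₁
  obtain ⟨c', hcm', hcl', hcr'⟩ := cunit_of_right hfd hp'p' hp'c hz'c c₁.2 hzc₁
  exact ⟨c', hcm', hcl', hcr'⟩


lemma smul_proj_nonneg [PartialOrder A] [StarOrderedRing A] {c : ℝ} (hc : 0 ≤ c)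
    {q : A} (hqs : star q = q) (hqq : q * q = q) : 0 ≤ (c : ℂ) • q := by
  have key : (c : ℂ) • q = star ((Real.sqrt c : ℂ) • q) * ((Real.sqrt c : ℂ) • q) := by
    rw [star_smul, hqs, smul_mul_smul_comm, hqq]
    congr 1
    rw [Complex.star_def, Complex.conj_ofReal, ← Complex.ofReal_mul, Real.mul_self_sqrt hc]
  rw [key]
  exact star_mul_self_nonneg _

lemma nilpotent_aux {u m : A} (hm : IsNilpotent m) (huu : u * u = 0) (hum : u * m = 0) :
    IsNilpotent (u + m) := by
  obtain ⟨N, hN⟩ := hm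
  refine ⟨N + 1, ?_⟩
  have key : ∀ k : ℕ, (u + m) ^ (k + 1) = m ^ (k + 1) + m ^ k * u := by
    intro k
    induction k with
    | zero => simp [add_comm]
    | succ k ih =>
      rw [pow_succ, ih, mul_add, add_mul, add_mul, mul_assoc (m ^ k) u u, huu, mul_zero,
        mul_assoc (m ^ k) u m, hum, mul_zero, add_zero, add_zero, ← pow_succ]
      abel
  rw [key N, hN, pow_succ, hN, zero_mul, zero_mul, add_zero]


lemma core (hfd : FiniteDimensional ℂ S) [Nontrivial A] [PartialOrder A] [StarOrderedRing A] :
    ∀ (n : ℕ) (p b : A), p ∈ S → star p = p → p * p = p → b ∈ corner S p →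
      Module.finrank ℂ (corner S p) ≤ n →
      ∀ r : ℝ, 0 ≤ r → (∀ lam : ℂ, ¬ CUnit S p b lam → ‖lam‖ ≤ r) →
      ∃ d m : A, d ∈ corner S p ∧ m ∈ corner S p ∧ b = d + m ∧ IsNilpotent m ∧
        star d * d ≤ ((r ^ 2 : ℝ) : ℂ) • p := by
  intro n
  induction n with
  | zero =>
    intro p b hpS hpst hp hb hrank r hr H
    haveI := corner_fd hfd p
    have hbot : corner S p = ⊥ := Submodule.finrank_eq_zero.mp (Nat.le_zero.mp hrank)
    have hpc : p ∈ corner S p := ⟨hpS, by rw [hp, hp]⟩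
    have hp0 : p = 0 := by
      have h2 := hbot ▸ hpc
      simpa using h2
    have hb0 : b = 0 := by
      have h2 := hbot ▸ hb
      simpa using h2
    exact ⟨0, 0, zero_mem _, zero_mem _, by rw [hb0, add_zero], ⟨1, by simp⟩, by
      rw [hp0]; simp⟩
  | succ n ih =>
    intro p b hpS hpst hp hb hrank r hr H
    haveI := corner_fd hfd p
    by_cases hp0 : p = 0
    · have hb0 : b = 0 := by rw [← hb.2, hp0]; simp
      exact ⟨0, 0, zero_mem _, zero_mem _, by rw [hb0, add_zero], ⟨1, by simp⟩, by
        rw [hp0]; simp⟩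
    have hpc : p ∈ corner S p := ⟨hpS, by rw [hp, hp]⟩
    obtain ⟨lam0, x, hx, hx0, hxb, hncu⟩ := exists_eigen hfd hpc hp hp0 hb
    have hlam0 : ‖lam0‖ ≤ r := H lam0 hncu
    set h := star x * x with hhdef
    have hhS : h ∈ S := mul_mem (star_mem hx.1) hx.1
    have hhsa : star h = h := by rw [hhdef, star_mul, star_star]
    have hpx : p * x = x := corner_left hp hx
    have hxp : x * p = x := corner_right hp hx
    have hsxp : star x * p = star x := by
      conv_lhs => rw [← hpst, ← star_mul]
      rw [hpx]
    have hpsx : p * star x = star x := by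
      conv_lhs => rw [← hpst, ← star_mul]
      rw [hxp]
    have hph : p * h = h := by rw [hhdef, ← mul_assoc, hpsx]
    have hhp : h * p = h := by rw [hhdef, mul_assoc, hxp]
    have hhb : h * b = lam0 • h := by rw [hhdef, mul_assoc, hxb, mul_smul_comm]
    obtain ⟨q, w, hqS, hwS, hqst, hqq, hqh, hhq, hqhw, hqwh⟩ := support_proj S hfd hhS hhsa
    have hqb : q * b = lam0 • q := by
      conv_lhs => rw [hqwh, mul_assoc, hhb, mul_smul_comm]
      rw [← hqwh]
    have hpq : p * q = q := by
      conv_lhs => rw [hqhw, ← mul_assoc, hph]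
      rw [← hqhw]
    have hqp : q * p = q := by
      conv_lhs => rw [hqwh, mul_assoc, hhp]
      rw [← hqwh]
    have hxq : x * q = x := by
      have hzz : star (x - x * q) * (x - x * q) = 0 := by
        have e1 : star (x - x * q) = star x - q * star x := by
          rw [star_sub, star_mul, hqst]
        have e2 : (star x - q * star x) * (x - x * q) = h - h * q - (q * h - q * h * q) := by
          rw [hhdef]
          noncomm_ring
        rw [e1, e2, hqh, hhq]
        abel
      have h2 : ‖x - x * q‖ * ‖x - x * q‖ = 0 := by
        rw [← CStarRing.norm_star_mul_self, hzz, norm_zero]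
      have h3 : x - x * q = 0 := by
        rw [← norm_eq_zero]
        exact mul_self_eq_zero.mp h2
      have := sub_eq_zero.mp h3
      exact this.symm
    have hq0 : q ≠ 0 := by
      intro h0
      exact hx0 (by rw [← hxq, h0, mul_zero])
    have hqc : q ∈ corner S p := ⟨hqS, by rw [hpq, hqp]⟩
    set p' := p - q with hp'def
    have hp'S : p' ∈ S := sub_mem hpS hqS
    have hp'st : star p' = p' := by rw [hp'def, star_sub, hpst, hqst]
    have hp'p' : p' * p' = p' := by
      rw [hp'def, sub_mul, mul_sub, mul_sub, hp, hpq, hqp, hqq]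
      abel
    have hqp' : q * p' = 0 := by rw [hp'def, mul_sub, hqp, hqq, sub_self]
    have hp'q : p' * q = 0 := by rw [hp'def, sub_mul, hpq, hqq, sub_self]
    have hpp' : p * p' = p' := by rw [hp'def, mul_sub, hp, hpq]
    have hp'p : p' * p = p' := by rw [hp'def, sub_mul, hp, hqp]
    have hp'c : p' ∈ corner S p' := ⟨hp'S, by rw [hp'p', hp'p']⟩
    set b' := p' * b * p' with hb'def
    have hb'c : b' ∈ corner S p' := ⟨mul_mem (mul_mem hp'S hb.1) hp'S, by
      rw [hb'def, ← mul_assoc, ← mul_assoc, hp'p', mul_assoc (p' * b), hp'p', mul_assoc]⟩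
    have hle : corner S p' ≤ corner S p := by
      intro y hy
      refine ⟨hy.1, ?_⟩
      have hp'y : p' * y = y := corner_left hp'p' hy
      have hyp' : y * p' = y := corner_right hp'p' hy
      calc p * y * p = p * (p' * y) * p := by rw [hp'y]
        _ = (p * p') * y * p := by rw [← mul_assoc]
        _ = p' * y * p := by rw [hpp']
        _ = y * p := by rw [hp'y]
        _ = (y * p') * p := by rw [hyp']
        _ = y * (p' * p) := by rw [mul_assoc]
        _ = y * p' := by rw [hp'p]
        _ = y := hyp'
    have hlt : corner S p' < corner S p := by
      rw [SetLike.lt_iff_le_and_exists]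
      refine ⟨hle, q, hqc, fun hqc' => hq0 ?_⟩
      have := hqc'.2
      rw [hp'q, zero_mul] at this
      exact this.symm
    haveI := corner_fd hfd p'
    have hrank' : Module.finrank ℂ (corner S p') ≤ n := by
      have := Submodule.finrank_lt_finrank_of_lt hlt
      omega
    have H' : ∀ lam : ℂ, ¬ CUnit S p' b' lam → ‖lam‖ ≤ r := by
      intro lam hcu
      refine H lam (fun hcu2 => hcu ?_)
      exact cunit_descend hfd hpS hp hb hqc hqq hqb lam hcu2
    obtain ⟨d', m', hd'c, hm'c, hb'eq, hm'nil, hd'le⟩ :=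
      ih p' b' hp'S hp'st hp'p' hb'c hrank' r hr H'
    set u := p' * b * q with hudef
    have huc : u ∈ corner S p := by
      refine ⟨mul_mem (mul_mem hp'S hb.1) hqS, ?_⟩
      calc p * (p' * b * q) * p = ((p * p') * b * q) * p := by
            rw [← mul_assoc, ← mul_assoc]
        _ = (p' * b * q) * p := by rw [hpp']
        _ = p' * b * (q * p) := by rw [mul_assoc]
        _ = p' * b * q := by rw [hqp]
    have hdecomp : b = lam0 • q + u + b' := by
      have hsum : p = q + p' := by rw [hp'def]; abel
      have e1 : b = q * b * q + q * b * p' + (p' * b * q + p' * b * p') := by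
        conv_lhs => rw [← hb.2, hsum]
        rw [add_mul, add_mul, mul_add, mul_add]
      have e2 : q * b * q = lam0 • q := by rw [hqb, smul_mul_assoc, hqq]
      have e3 : q * b * p' = 0 := by rw [hqb, smul_mul_assoc, hqp', smul_zero]
      rw [e1, e2, e3, hudef, hb'def]
      abel
    refine ⟨lam0 • q + d', u + m', ?_, ?_, ?_, ?_, ?_⟩
    · exact add_mem (Submodule.smul_mem _ _ hqc) (hle hd'c)
    · exact add_mem huc (hle hm'c)
    · rw [hdecomp, hb'eq]
      abel
    · apply nilpotent_aux hm'nil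
      · have : u * u = p' * b * (q * p') * (b * q) := by
          rw [hudef]
          noncomm_ring
        rw [this, hqp', mul_zero, zero_mul]
      · have hm'e : p' * m' * p' = m' := hm'c.2
        calc u * m' = p' * b * (q * m') := by rw [hudef, mul_assoc]
          _ = p' * b * (q * (p' * m' * p')) := by rw [hm'e]
          _ = 0 := by rw [← mul_assoc q, ← mul_assoc q, hqp', zero_mul, zero_mul, mul_zero]
    · have hqd' : q * d' = 0 := by
        calc q * d' = q * (p' * d' * p') := by rw [hd'c.2]
          _ = 0 := by rw [← mul_assoc, ← mul_assoc, hqp', zero_mul, zero_mul]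
      have hd'q : star d' * q = 0 := by
        have h1 : star d' = p' * star d' * p' := by
          conv_lhs => rw [← hd'c.2, star_mul, star_mul, hp'st, ← mul_assoc]
        calc star d' * q = (p' * star d' * p') * q := by rw [← h1]
          _ = 0 := by rw [mul_assoc, hp'q, mul_zero]
      have hsc : star lam0 * lam0 = ((‖lam0‖ ^ 2 : ℝ) : ℂ) := by
        rw [Complex.star_def, mul_comm, Complex.mul_conj]
        rw [Complex.normSq_eq_norm_sq]
      have hexp : star (lam0 • q + d') * (lam0 • q + d')
          = ((‖lam0‖ ^ 2 : ℝ) : ℂ) • q + star d' * d' := by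
        rw [star_add, star_smul, hqst, add_mul, mul_add, mul_add, smul_mul_smul_comm, hqq,
          smul_mul_assoc, hqd', smul_zero, mul_smul_comm, hd'q, smul_zero, hsc, add_zero,
          zero_add]
      have hle1 : ((‖lam0‖ ^ 2 : ℝ) : ℂ) • q ≤ ((r ^ 2 : ℝ) : ℂ) • q := by
        rw [← sub_nonneg, ← sub_smul]
        have e4 : ((r ^ 2 : ℝ) : ℂ) - ((‖lam0‖ ^ 2 : ℝ) : ℂ) = (((r ^ 2 - ‖lam0‖ ^ 2 : ℝ)) : ℂ) := by
          push_cast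
          ring
        rw [e4]
        exact smul_proj_nonneg (by nlinarith [norm_nonneg lam0]) hqst hqq
      calc star (lam0 • q + d') * (lam0 • q + d')
          = ((‖lam0‖ ^ 2 : ℝ) : ℂ) • q + star d' * d' := hexp
        _ ≤ ((r ^ 2 : ℝ) : ℂ) • q + ((r ^ 2 : ℝ) : ℂ) • p' := add_le_add hle1 hd'le
        _ = ((r ^ 2 : ℝ) : ℂ) • p := by
            rw [← smul_add]
            congr 1
            rw [hp'def]
            abel


lemma fd_nilpotent_approx (S : StarSubalgebra ℂ A) (hfd : FiniteDimensional ℂ S) [Nontrivial A]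
    [PartialOrder A] [StarOrderedRing A] {b : A} (hb : b ∈ S) {r : ℝ} (hr : 0 ≤ r)
    (hspec : ∀ z ∈ spectrum ℂ b, ‖z‖ ≤ r) :
    ∃ m : A, m ∈ S ∧ IsNilpotent m ∧ ‖b - m‖ ≤ r := by
  haveI hclosed : IsClosed (S : Set A) := by
    haveI : FiniteDimensional ℂ (Subalgebra.toSubmodule S.toSubalgebra) := hfd
    exact Submodule.closed_of_finiteDimensional (Subalgebra.toSubmodule S.toSubalgebra)
  have hbc : b ∈ corner S 1 := ⟨hb, by rw [one_mul, mul_one]⟩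
  have H : ∀ lam : ℂ, ¬ CUnit S 1 b lam → ‖lam‖ ≤ r := by
    intro lam hcu
    by_contra hgt
    push_neg at hgt
    have hnotin : lam ∉ spectrum ℂ b := fun hin => absurd (hspec lam hin) (not_le.mpr hgt)
    rw [spectrum.notMem_iff] at hnotin
    set bS : ↥S := ⟨b, hb⟩ with hbS
    have hcoe : ((algebraMap ℂ ↥S lam - bS : ↥S) : A) = algebraMap ℂ A lam - b := by
      push_cast
      rfl
    have hunitS : IsUnit (algebraMap ℂ ↥S lam - bS) := by
      rw [← StarSubalgebra.coe_isUnit (S := S), hcoe]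
      exact hnotin
    have hu : IsUnit (bS - algebraMap ℂ ↥S lam) := by
      simpa using hunitS.neg
    obtain ⟨v, hv⟩ := hu
    apply hcu
    refine ⟨((v⁻¹ : (↥S)ˣ) : ↥S), ⟨((v⁻¹ : (↥S)ˣ) : ↥S).2, by rw [one_mul, mul_one]⟩, ?_, ?_⟩
    · have h1 : ((v⁻¹ : (↥S)ˣ) : ↥S) * (bS - algebraMap ℂ ↥S lam) = 1 := by
        rw [← hv]
        exact v.inv_mul
      have h2 := congrArg (Subtype.val : ↥S → A) h1
      push_cast at h2
      rw [Algebra.algebraMap_eq_smul_one] at h2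
      exact_mod_cast h2
    · have h1 : (bS - algebraMap ℂ ↥S lam) * ((v⁻¹ : (↥S)ˣ) : ↥S) = 1 := by
        rw [← hv]
        exact v.mul_inv
      have h2 := congrArg (Subtype.val : ↥S → A) h1
      push_cast at h2
      rw [Algebra.algebraMap_eq_smul_one] at h2
      exact_mod_cast h2
  obtain ⟨d, m, hdc, hmc, hbdm, hmnil, hdle⟩ := core hfd (Module.finrank ℂ (corner S 1)) 1 b
    (one_mem S) (star_one A) (one_mul 1) hbc le_rfl r hr H
  refine ⟨m, hmc.1, hmnil, ?_⟩
  have hbm : b - m = d := by rw [hbdm, add_sub_cancel_right]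
  rw [hbm]
  have h1 : ‖star d * d‖ ≤ ‖((r ^ 2 : ℝ) : ℂ) • (1 : A)‖ :=
    CStarAlgebra.norm_le_norm_of_nonneg_of_le (star_mul_self_nonneg d) hdle
  have h2 : ‖((r ^ 2 : ℝ) : ℂ) • (1 : A)‖ = r ^ 2 := by
    rw [norm_smul, CStarRing.norm_one, mul_one, Complex.norm_real, Real.norm_of_nonneg (by positivity)]
  rw [h2] at h1
  rw [CStarRing.norm_star_mul_self] at h1
  nlinarith [norm_nonneg d, h1]



end AFNil


/-- In an AF C*-algebra `𝔄 = cl(⋃ 𝔄ₖ)` (with `𝔄ₖ` an increasing chain of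
finite-dimensional C*-subalgebras), every norm limit of quasinilpotent elements
of `𝔄` is a norm limit of nilpotent elements of the subalgebras `𝔄ₖ`. -/

theorem AF_limit_quasinilpotent_iff_limit_nilpotent
    {A : Type*} [CStarAlgebra A] (𝔄 : ℕ → StarSubalgebra ℂ A)
    (hmono : Monotone 𝔄) (hfd : ∀ k, FiniteDimensional ℂ (𝔄 k))
    (hdense : closure (⋃ k, (𝔄 k : Set A)) = Set.univ)
    (T : A) (hT : T ∈ closure {Q : A | spectrum ℂ Q = {0}}) :
    T ∈ closure {M : A | (∃ k, M ∈ 𝔄 k) ∧ IsNilpotent M} := by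
  rcases subsingleton_or_nontrivial A with hsub | hnt
  · refine subset_closure ⟨⟨0, ?_⟩, 1, ?_⟩
    · rw [Subsingleton.elim T 0]
      exact zero_mem _
    · exact Subsingleton.elim _ _
  · letI : PartialOrder A := CStarAlgebra.spectralOrder A
    haveI : StarOrderedRing A := CStarAlgebra.spectralOrderedRing A
    rw [Metric.mem_closure_iff]
    intro ε hε
    rw [Metric.mem_closure_iff] at hT
    obtain ⟨Q, hQ, hTQ⟩ := hT (ε/3) (by positivity)
    set s := ε/3 with hs_def
    have hs : 0 < s := by positivity
    -- Gelfand's formula: some power of Q is small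
    have hrad : spectralRadius ℂ Q = 0 := by
      rw [spectralRadius, hQ]
      simp
    have htend := spectrum.pow_norm_pow_one_div_tendsto_nhds_spectralRadius Q
    rw [hrad] at htend
    have hev : ∀ᶠ n : ℕ in Filter.atTop,
        ENNReal.ofReal (‖Q ^ n‖ ^ (1 / (n : ℝ))) < ENNReal.ofReal s :=
      htend.eventually_lt_const (by simp [ENNReal.ofReal_pos, hs])
    obtain ⟨n, hnQ, hn1⟩ := (hev.and (Filter.eventually_ge_atTop 1)).exists
    rw [ENNReal.ofReal_lt_ofReal_iff hs] at hnQ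
    have hQn : ‖Q ^ n‖ < s ^ n := by
      have hn0 : (n : ℝ) ≠ 0 := by
        exact Nat.cast_ne_zero.mpr (by omega)
      calc ‖Q ^ n‖ = (‖Q ^ n‖ ^ (1 / (n : ℝ))) ^ (n : ℕ) := by
            rw [← Real.rpow_natCast (‖Q ^ n‖ ^ (1 / (n : ℝ))) n, ← Real.rpow_mul (norm_nonneg _),
              one_div_mul_cancel hn0, Real.rpow_one]
        _ < s ^ n := by
            apply pow_lt_pow_left₀ hnQ (Real.rpow_nonneg (norm_nonneg _) _)
            omega
    -- choose B in some 𝔄 k close to Q with ‖B^n‖ still small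
    have hcont : ContinuousAt (fun y : A => ‖y ^ n‖) Q := ((continuous_pow n).norm).continuousAt
    have hnb : {y : A | ‖y ^ n‖ < s ^ n} ∈ nhds Q := hcont.preimage_mem_nhds (Iio_mem_nhds hQn)
    obtain ⟨δ, hδ0, hδsub⟩ := Metric.mem_nhds_iff.mp hnb
    have hQmem : Q ∈ closure (⋃ k, ((𝔄 k : Set A))) := by
      rw [hdense]
      trivial
    rw [Metric.mem_closure_iff] at hQmem
    obtain ⟨B, hBmem, hQB⟩ := hQmem (min δ s) (by positivity)
    obtain ⟨k, hBk⟩ := Set.mem_iUnion.mp hBmem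
    have hBball : B ∈ Metric.ball Q δ := by
      rw [Metric.mem_ball, dist_comm]
      exact lt_of_lt_of_le hQB (min_le_left _ _)
    have hBn : ‖B ^ n‖ < s ^ n := hδsub hBball
    have hBspec : ∀ z ∈ spectrum ℂ B, ‖z‖ ≤ s := by
      intro z hz
      by_contra hgt
      push_neg at hgt
      have hzn : z ^ n ∈ spectrum ℂ (B ^ n) := by
        have himg : z ^ n ∈ (fun k => Polynomial.eval k ((X : ℂ[X]) ^ n)) '' spectrum ℂ B :=
          ⟨z, hz, by simp⟩
        have := spectrum.subset_polynomial_aeval B ((X : ℂ[X]) ^ n) himg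
        simpa using this
      have h1 : ‖z ^ n‖ ≤ ‖B ^ n‖ := spectrum.norm_le_norm_of_mem hzn
      rw [norm_pow] at h1
      have h2 : s ^ n ≤ ‖z‖ ^ n := pow_le_pow_left₀ (le_of_lt hs) (le_of_lt hgt) n
      linarith
    obtain ⟨m, hmS, hmnil, hBm⟩ :=
      AFNil.fd_nilpotent_approx (𝔄 k) (hfd k) hBk (le_of_lt hs) hBspec
    refine ⟨m, ⟨⟨k, hmS⟩, hmnil⟩, ?_⟩
    have h1 : dist Q B < s := lt_of_lt_of_le hQB (min_le_right _ _)
    have h2 : dist B m ≤ s := by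
      rw [dist_eq_norm]
      exact hBm
    calc dist T m ≤ dist T Q + dist Q B + dist B m := dist_triangle4 T Q B m
      _ < s + s + s := by linarith [hTQ]
      _ = ε := by
          rw [hs_def]
          ring
end

section
/- Let 𝔄 be a C*-algebra admitting a faithful tracial state τ. Then no nonzero positive element of 𝔄 is a norm limit of nilpotent elements of 𝔄; more precisely, if A ∈ 𝔄₊ is a norm limit of nilpotents then τ(A) = 0 and hence A = 0. -/
section Aux

variable {A : Type*} [CStarAlgebra A] [PartialOrder A] [StarOrderedRing A]

/-- A positive unital linear functional on a C*-algebra is bounded (by `2‖x‖`). -/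
private lemma tau_norm_bound (τ : A →ₗ[ℂ] ℂ)
    (hpos : ∀ a : A, 0 ≤ a → ∃ r : ℝ, 0 ≤ r ∧ τ a = (r : ℂ))
    (hone : τ 1 = 1) (x : A) : ‖τ x‖ ≤ 2 * ‖x‖ := by
  have halg : ∀ t : ℝ, τ (algebraMap ℝ A t) = (t : ℂ) := by
    intro t
    rw [IsScalarTower.algebraMap_apply ℝ ℂ A, Algebra.algebraMap_eq_smul_one, map_smul, hone]
    simp
  have hsa : ∀ y : A, IsSelfAdjoint y → ‖τ y‖ ≤ ‖y‖ := by
    intro y hy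
    obtain ⟨r₁, hr₁, e₁⟩ := hpos (algebraMap ℝ A ‖y‖ - y)
      (sub_nonneg.2 hy.le_algebraMap_norm_self)
    obtain ⟨r₂, hr₂, e₂⟩ := hpos (y + algebraMap ℝ A ‖y‖)
      (by simpa [sub_neg_eq_add] using sub_nonneg.2 hy.neg_algebraMap_norm_le_self)
    rw [map_sub, halg] at e₁
    rw [map_add, halg] at e₂
    have hτy : τ y = ((‖y‖ - r₁ : ℝ) : ℂ) := by
      push_cast
      rw [← e₁]; ring
    have hsum : r₁ + r₂ = 2 * ‖y‖ := by
      have : ((r₁ + r₂ : ℝ) : ℂ) = ((2 * ‖y‖ : ℝ) : ℂ) := by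
        push_cast
        rw [← e₁, ← e₂]; ring
      exact_mod_cast this
    rw [hτy, Complex.norm_real]
    rw [Real.norm_eq_abs, abs_le]
    constructor <;> nlinarith [norm_nonneg y]
  -- decompose x into real and imaginary selfadjoint parts
  set y : A := (2⁻¹ : ℂ) • (x + star x) with hy
  set z : A := (Complex.I * 2⁻¹) • (star x - x) with hz
  have hysa : IsSelfAdjoint y := by
    rw [IsSelfAdjoint, hy, star_smul, star_add, star_star]
    rw [show star (2⁻¹ : ℂ) = (2⁻¹ : ℂ) by simp [Complex.ext_iff]]
    rw [add_comm]
  have hzsa : IsSelfAdjoint z := by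
    rw [IsSelfAdjoint, hz, star_smul, star_sub, star_star]
    rw [show star (Complex.I * 2⁻¹) = -(Complex.I * 2⁻¹) by simp [Complex.ext_iff]]
    rw [neg_smul, ← smul_neg, neg_sub]
  have hdecomp : x = y + Complex.I • z := by
    rw [hy, hz, smul_smul]
    rw [show Complex.I * (Complex.I * 2⁻¹) = -2⁻¹ by rw [← mul_assoc, Complex.I_mul_I]; ring]
    module
  have hny : ‖y‖ ≤ ‖x‖ := by
    rw [hy]
    calc ‖(2⁻¹ : ℂ) • (x + star x)‖ = 2⁻¹ * ‖x + star x‖ := by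
          rw [norm_smul]; simp
      _ ≤ 2⁻¹ * (‖x‖ + ‖star x‖) := by
          gcongr; exact norm_add_le _ _
      _ = ‖x‖ := by rw [norm_star]; ring
  have hnz : ‖z‖ ≤ ‖x‖ := by
    rw [hz]
    calc ‖(Complex.I * 2⁻¹) • (star x - x)‖ = ‖Complex.I * 2⁻¹‖ * ‖star x - x‖ := norm_smul _ _
      _ ≤ 2⁻¹ * (‖star x‖ + ‖x‖) := by
          gcongr
          · simp [Complex.norm_I]
          · exact norm_sub_le _ _
      _ = ‖x‖ := by rw [norm_star]; ring
  calc ‖τ x‖ = ‖τ y + Complex.I * τ z‖ := by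
        rw [hdecomp, map_add, map_smul]; simp
    _ ≤ ‖τ y‖ + ‖Complex.I * τ z‖ := norm_add_le _ _
    _ = ‖τ y‖ + ‖τ z‖ := by simp
    _ ≤ ‖y‖ + ‖z‖ := add_le_add (hsa y hysa) (hsa z hzsa)
    _ ≤ 2 * ‖x‖ := by linarith

/-- A tracial positive unital linear functional vanishes on nilpotents. -/
private lemma tau_nilpotent (τ : A →ₗ[ℂ] ℂ)
    (hpos : ∀ a : A, 0 ≤ a → ∃ r : ℝ, 0 ≤ r ∧ τ a = (r : ℂ))
    (hone : τ 1 = 1)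
    (htracial : ∀ x y : A, τ (x * y) = τ (y * x))
    (M : A) (hM : IsNilpotent M) : τ M = 0 := by
  have hnt : Nontrivial A := by
    by_contra h
    rw [not_nontrivial_iff_subsingleton] at h
    have h10 : (1 : A) = 0 := Subsingleton.elim _ _
    rw [h10, map_zero] at hone
    exact one_ne_zero hone.symm
  have hbound := tau_norm_bound τ hpos hone
  obtain ⟨m, hm⟩ := hM
  have hM1 : M ^ (m + 1) = 0 := by rw [pow_succ, hm, zero_mul]
  have key : ∀ c : ℝ, 0 < c → ‖τ M‖ ≤ 2 * Real.sqrt c⁻¹ := by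
    intro c hc
    set Q : A := ∑ j ∈ Finset.range m, c ^ (j + 1) • (star (M ^ (j + 1)) * M ^ (j + 1)) with hQdef
    have hQ : 0 ≤ Q := Finset.sum_nonneg fun j _ =>
      smul_nonneg (pow_nonneg hc.le _) (star_mul_self_nonneg _)
    set S : A := 1 + Q with hSdef
    have hterm : ∀ n : ℕ, star M * (star (M ^ n) * M ^ n) * M
        = star (M ^ (n + 1)) * M ^ (n + 1) := by
      intro n
      rw [pow_succ, star_mul]
      noncomm_ring
    have hlast : star (M ^ (m + 1)) * M ^ (m + 1) = 0 := by rw [hM1]; simp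
    have hkey : star M * S * M = c⁻¹ • Q := by
      have lhs_eq : star M * S * M
          = ∑ j ∈ Finset.range (m + 1), c ^ j • (star (M ^ (j + 1)) * M ^ (j + 1)) := by
        have e0 : star M * S * M = star M * M + star M * Q * M := by
          rw [hSdef]; noncomm_ring
        rw [e0, Finset.sum_range_succ', add_comm]
        congr 1
        · rw [hQdef, Finset.mul_sum, Finset.sum_mul]
          apply Finset.sum_congr rfl
          intro j _
          rw [mul_smul_comm, smul_mul_assoc, hterm (j + 1)]
        · rw [zero_add, pow_zero, pow_one, one_smul]
      have rhs_eq : c⁻¹ • Q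
          = ∑ j ∈ Finset.range (m + 1), c ^ j • (star (M ^ (j + 1)) * M ^ (j + 1)) := by
        rw [Finset.sum_range_succ, hlast, smul_zero, add_zero, hQdef, Finset.smul_sum]
        apply Finset.sum_congr rfl
        intro j _
        rw [smul_smul, pow_succ', inv_mul_cancel_left₀ hc.ne']
      rw [lhs_eq, rhs_eq]
    -- continuous functional calculus setup
    have hQsa : IsSelfAdjoint Q := IsSelfAdjoint.of_nonneg hQ
    have hspec : ∀ t ∈ spectrum ℝ Q, 0 ≤ t := fun t ht => spectrum_nonneg_of_nonneg hQ ht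
    set f : ℝ → ℝ := fun t => Real.sqrt (1 + t) with hf
    set g : ℝ → ℝ := fun t => (Real.sqrt (1 + t))⁻¹ with hg
    have hfc : ContinuousOn f (spectrum ℝ Q) :=
      (Real.continuous_sqrt.comp (continuous_const.add continuous_id)).continuousOn
    have hfne : ∀ t ∈ spectrum ℝ Q, f t ≠ 0 := by
      intro t ht
      have : (0 : ℝ) < 1 + t := by linarith [hspec t ht]
      exact (Real.sqrt_pos.2 this).ne'
    have hgc : ContinuousOn g (spectrum ℝ Q) := hfc.inv₀ hfne
    set s : A := cfc f Q with hs
    set r : A := cfc g Q with hr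
    have hs_sa : IsSelfAdjoint s := cfc_predicate f Q
    have hr_sa : IsSelfAdjoint r := cfc_predicate g Q
    have hsr : s * r = 1 := by
      rw [hs, hr, ← cfc_mul f g Q hfc hgc, ← cfc_one ℝ Q]
      exact cfc_congr fun t ht => mul_inv_cancel₀ (hfne t ht)
    have hrs : r * s = 1 := by
      rw [hs, hr, ← cfc_mul g f Q hgc hfc, ← cfc_one ℝ Q]
      exact cfc_congr fun t ht => inv_mul_cancel₀ (hfne t ht)
    have hss : s * s = S := by
      rw [hs, ← cfc_mul f f Q hfc hfc]
      have : cfc (fun t => f t * f t) Q = cfc (fun t : ℝ => 1 + t) Q := by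
        apply cfc_congr
        intro t ht
        have h1t : (0 : ℝ) ≤ 1 + t := by linarith [hspec t ht]
        simp only [hf]
        exact Real.mul_self_sqrt h1t
      rw [this, cfc_const_add (1 : ℝ) (fun t : ℝ => t) Q continuousOn_id hQsa]
      rw [cfc_id' ℝ Q, hSdef]
      congr 1
      simp [Algebra.algebraMap_eq_smul_one]
    have hr0 : 0 ≤ r := by
      rw [hr]
      exact cfc_nonneg fun t ht => inv_nonneg.2 (Real.sqrt_nonneg _)
    -- the conjugated element
    set T : A := s * M * r with hT
    have hτT : τ T = τ M := by
      rw [hT, htracial (s * M) r, ← mul_assoc, hrs, one_mul]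
    have hrQr : r * Q * r = 1 - r * r := by
      have h1 : r * S * r = 1 := by
        rw [← hss]
        calc r * (s * s) * r = (r * s) * (s * r) := by noncomm_ring
          _ = 1 := by rw [hrs, hsr, one_mul]
      have h2 : r * S * r = r * r + r * Q * r := by
        rw [hSdef]; noncomm_ring
      rw [h2] at h1
      linear_combination (norm := noncomm_ring) h1
    have hQrr : 0 ≤ r * Q * r := by
      have := star_left_conjugate_nonneg hQ r
      rwa [hr_sa.star_eq] at this
    have hTT : star T * T = c⁻¹ • (r * Q * r) := by
      have e1 : star T * T = r * (star M * S * M) * r := by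
        rw [hT, star_mul, star_mul, hr_sa.star_eq, hs_sa.star_eq, ← hss]
        noncomm_ring
      rw [e1, hkey, mul_smul_comm, smul_mul_assoc]
    have hrr0 : 0 ≤ r * r := by
      have := star_mul_self_nonneg r
      rwa [hr_sa.star_eq] at this
    have hle1 : r * Q * r ≤ 1 := by
      rw [hrQr]
      exact sub_le_self _ hrr0
    have hnorm_rQr : ‖r * Q * r‖ ≤ 1 := by
      calc ‖r * Q * r‖ ≤ ‖(1 : A)‖ := CStarAlgebra.norm_le_norm_of_nonneg_of_le hQrr hle1
        _ = 1 := norm_one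
    have hT2 : ‖T‖ ^ 2 ≤ c⁻¹ := by
      have : ‖star T * T‖ = ‖T‖ * ‖T‖ := CStarRing.norm_star_mul_self
      rw [hTT] at this
      rw [norm_smul, Real.norm_eq_abs, abs_of_nonneg (inv_nonneg.2 hc.le)] at this
      have hle : c⁻¹ * ‖r * Q * r‖ ≤ c⁻¹ * 1 :=
        mul_le_mul_of_nonneg_left hnorm_rQr (inv_nonneg.2 hc.le)
      rw [pow_two, ← this]
      linarith
    have hTn : ‖T‖ ≤ Real.sqrt c⁻¹ := by
      rw [Real.le_sqrt (norm_nonneg T) (inv_nonneg.2 hc.le)]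
      exact hT2
    calc ‖τ M‖ = ‖τ T‖ := by rw [hτT]
      _ ≤ 2 * ‖T‖ := hbound T
      _ ≤ 2 * Real.sqrt c⁻¹ := by linarith
  -- conclude τ M = 0
  by_contra hne
  have hpos' : 0 < ‖τ M‖ := norm_pos_iff.2 hne
  set c : ℝ := (4 / ‖τ M‖) ^ 2 with hcdef
  have hc : 0 < c := by positivity
  have hcinv : Real.sqrt c⁻¹ = ‖τ M‖ / 4 := by
    rw [hcdef, ← inv_pow, Real.sqrt_sq (by positivity)]
    field_simp
  have := key c hc
  rw [hcinv] at this
  linarith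

end Aux

/-- If a C*-algebra admits a faithful tracial state `τ`, then any positive
element that is a norm limit of nilpotent elements satisfies `τ(A) = 0`;
hence it is zero. -/
theorem faithful_trace_kills_positive_limits_of_nilpotents
    {A : Type*} [CStarAlgebra A] [PartialOrder A] [StarOrderedRing A]
    (τ : A →ₗ[ℂ] ℂ)
    (hpos : ∀ a : A, 0 ≤ a → ∃ r : ℝ, 0 ≤ r ∧ τ a = (r : ℂ))
    (hone : τ 1 = 1)
    (htracial : ∀ x y : A, τ (x * y) = τ (y * x))
    (hfaithful : ∀ a : A, 0 ≤ a → τ a = 0 → a = 0)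
    (a : A) (ha : 0 ≤ a) (hlim : a ∈ closure {M : A | IsNilpotent M}) :
    τ a = 0 ∧ a = 0 := by
  have hbound := tau_norm_bound τ hpos hone
  have hτa : τ a = 0 := by
    have hsmall : ∀ ε : ℝ, 0 < ε → ‖τ a‖ ≤ 2 * ε := by
      intro ε hε
      obtain ⟨M, hMnil, hdist⟩ := Metric.mem_closure_iff.mp hlim ε hε
      have hτM : τ M = 0 := tau_nilpotent τ hpos hone htracial M hMnil
      have : τ a = τ (a - M) := by rw [map_sub, hτM, sub_zero]
      rw [this]
      calc ‖τ (a - M)‖ ≤ 2 * ‖a - M‖ := hbound _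
        _ ≤ 2 * ε := by
            have : ‖a - M‖ = dist a M := (dist_eq_norm a M).symm
            rw [this]; linarith
    by_contra hne
    have hp : 0 < ‖τ a‖ := norm_pos_iff.2 hne
    have := hsmall (‖τ a‖ / 4) (by positivity)
    linarith
  exact ⟨hτa, hfaithful a ha hτa⟩
end
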